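/- arXiv:1205.6360 — 5 statements merged into one kernel-verified Lean document; each statement's English description precedes it below -/
import Mathlib

section
/- Let 0 < r < 1/2, h > 0, and let 0 = t₀ < t₁ < ⋯ < t_N = 1 be a partition of I = (0,1) into subintervals γᵢ = (tᵢ₋₁, tᵢ) each of length at most h. Let v : [0,1] → ℝ be absolutely continuous with square-integrable derivative g. Then the diagonal sum satisfies ∑_{i=1}^N ∬_{γᵢ × γᵢ} |v(y) − v(x)|² / |y − x|^{1+2r} dx dy ≤ (1/(1 − 2r)) · h^{2−2r} · ∫₀¹ g(t)² dt. -/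
open MeasureTheory Set Finset
open scoped ENNReal NNReal

-- Cauchy-Schwarz on Ioc
lemma cs_Ioc {g : ℝ → ℝ} {m M : ℝ} (hmM : m ≤ M)
    (h1 : IntegrableOn g (Ioc m M)) (h2 : IntegrableOn (fun s => g s ^ 2) (Ioc m M)) :
    (∫ s in Ioc m M, g s) ^ 2 ≤ (M - m) * ∫ s in Ioc m M, g s ^ 2 := by
  rcases eq_or_lt_of_le hmM with rfl | hlt
  · simp
  set c := M - m with hc
  have hc0 : 0 < c := by simp [hc]; linarith
  set A := ∫ s in Ioc m M, g s with hA
  set B := ∫ s in Ioc m M, g s ^ 2 with hB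
  have hmeas : (volume (Ioc m M)).toReal = c := by
    rw [Real.volume_Ioc, ENNReal.toReal_ofReal hc0.le]
  have hint : IntegrableOn (fun s => (c * g s - A) ^ 2) (Ioc m M) := by
    have : (fun s => (c * g s - A) ^ 2)
        = fun s => c ^ 2 * g s ^ 2 - (2 * c * A) * g s + A ^ 2 := by
      funext s; ring
    rw [this]
    exact ((h2.const_mul _).sub (h1.const_mul _)).add (integrableOn_const
      (by rw [Real.volume_Ioc]; exact ENNReal.ofReal_ne_top))
  have hnn : 0 ≤ ∫ s in Ioc m M, (c * g s - A) ^ 2 :=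
    integral_nonneg fun s => sq_nonneg _
  have hexp : ∫ s in Ioc m M, (c * g s - A) ^ 2
      = c ^ 2 * B - (2 * c * A) * A + A ^ 2 * c := by
    have h3 : IntegrableOn (fun s => c ^ 2 * g s ^ 2 - (2 * c * A) * g s) (Ioc m M) :=
      (h2.const_mul _).sub (h1.const_mul _)
    have : (fun s => (c * g s - A) ^ 2)
        = fun s => (c ^ 2 * g s ^ 2 - (2 * c * A) * g s) + A ^ 2 := by
      funext s; ring
    rw [this, integral_add h3 (integrableOn_const
      (by rw [Real.volume_Ioc]; exact ENNReal.ofReal_ne_top)),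
      integral_sub (h2.const_mul _) (h1.const_mul _), integral_const_mul,
      integral_const_mul, setIntegral_const, smul_eq_mul, measureReal_def, hmeas]
    ring
  nlinarith [hnn, hexp, sq_nonneg A, sq_nonneg c]

-- the elementary inequality (u+w)^p - u^p - w^p ≤ (p/2)(u+w)^p for 1 ≤ p ≤ 2
lemma key_calc {p u w : ℝ} (hp1 : 1 ≤ p) (hp2 : p ≤ 2) (hu : 0 ≤ u) (hw : 0 ≤ w) :
    (u + w) ^ p - u ^ p - w ^ p ≤ p / 2 * (u + w) ^ p := by
  set L := u + w with hL
  rcases eq_or_lt_of_le (by linarith : (0:ℝ) ≤ L) with h0 | hLpos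
  · have hu0 : u = 0 := by linarith
    have hw0 : w = 0 := by linarith
    simp [← h0, hu0, hw0, Real.zero_rpow (by linarith : p ≠ 0)]
  -- claim : u^p + w^p ≥ L^p / 2
  have key : ∀ x : ℝ, 0 ≤ x → x ≤ L → x ^ 2 * L ^ (p - 2) ≤ x ^ p := by
    intro x hx hxL
    rcases eq_or_lt_of_le hx with h | hxpos
    · simp [← h, Real.zero_rpow (by linarith : p ≠ 0)]
    calc x ^ 2 * L ^ (p - 2) ≤ x ^ 2 * x ^ (p - 2) := by
          have := Real.rpow_le_rpow_of_nonpos hxpos hxL (by linarith : p - 2 ≤ 0)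
          exact mul_le_mul_of_nonneg_left this (sq_nonneg x)
      _ = x ^ (2:ℝ) * x ^ (p - 2) := by rw [Real.rpow_two]
      _ = x ^ p := by rw [← Real.rpow_add hxpos]; ring_nf
  have h1 := key u hu (by linarith)
  have h2 := key w hw (by linarith)
  have hsq : L ^ 2 / 2 ≤ u ^ 2 + w ^ 2 := by nlinarith [sq_nonneg (u - w)]
  have hLp : L ^ (2:ℝ) * L ^ (p - 2) = L ^ p := by
    rw [← Real.rpow_add hLpos]; ring_nf
  have hLpow : L ^ (2:ℝ) = L ^ 2 := Real.rpow_two L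
  have hLpnn : (0:ℝ) ≤ L ^ (p - 2) := Real.rpow_nonneg (by linarith) _
  have : L ^ p / 2 ≤ u ^ p + w ^ p := by
    calc L ^ p / 2 = (L ^ 2 / 2) * L ^ (p - 2) := by
          rw [← hLpow] at *; rw [← hLp]; ring
      _ ≤ (u ^ 2 + w ^ 2) * L ^ (p - 2) := by
          exact mul_le_mul_of_nonneg_right hsq hLpnn
      _ = u ^ 2 * L ^ (p - 2) + w ^ 2 * L ^ (p - 2) := by ring
      _ ≤ u ^ p + w ^ p := add_le_add h1 h2
  have hLppos : 0 < L ^ p := Real.rpow_pos_of_pos hLpos _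
  nlinarith

-- rpow integrals
lemma int_rpow_right {q : ℝ} (hq : -1 < q) (c α β : ℝ) :
    ∫ x in α..β, (x - c) ^ q = ((β - c) ^ (q + 1) - (α - c) ^ (q + 1)) / (q + 1) := by
  rw [intervalIntegral.integral_comp_sub_right (fun u => u ^ q) c,
    integral_rpow (Or.inl hq)]

lemma int_rpow_left {q : ℝ} (hq : -1 < q) (c α β : ℝ) :
    ∫ x in α..β, (c - x) ^ q = ((c - α) ^ (q + 1) - (c - β) ^ (q + 1)) / (q + 1) := by
  rw [intervalIntegral.integral_comp_sub_left (fun u => u ^ q) c,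
    integral_rpow (Or.inl hq)]

lemma ii_rpow_left {q : ℝ} (hq : -1 < q) (c α β : ℝ) :
    IntervalIntegrable (fun x => (c - x) ^ q) volume α β := by
  have := (intervalIntegral.intervalIntegrable_rpow' (a := c - α) (b := c - β) hq).comp_sub_left c
  simpa using this

lemma ii_rpow_right {q : ℝ} (hq : -1 < q) (c α β : ℝ) :
    IntervalIntegrable (fun x => (x - c) ^ q) volume α β := by
  have := (intervalIntegral.intervalIntegrable_rpow' (a := α - c) (b := β - c) hq).comp_sub_right c
  simpa using this

lemma W_real {r h a b s : ℝ} (hr0 : 0 < r) (hr : r < 1 / 2) (hh : 0 < h)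
    (hab : a < b) (hba : b - a ≤ h) (hs : s ∈ Ioc a b) :
    ∫ x in Ioc a b, (if x < s then ((b - x) ^ (1 - 2*r) - (s - x) ^ (1 - 2*r)) / (1 - 2*r)
      else ((x - a) ^ (1 - 2*r) - (x - s) ^ (1 - 2*r)) / (1 - 2*r))
      ≤ h ^ (2 - 2*r) / (1 - 2*r) := by
  obtain ⟨has, hsb⟩ := hs
  set q : ℝ := 1 - 2*r with hqdef
  set p : ℝ := 2 - 2*r with hpdef
  have hq0 : 0 < q := by simp only [hqdef]; linarith
  have hp0 : 0 < p := by simp only [hpdef]; linarith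
  have hqp : q + 1 = p := by simp [hqdef, hpdef]; ring
  have hq' : (-1:ℝ) < q := by linarith
  set f1 : ℝ → ℝ := fun x => ((b - x) ^ q - (s - x) ^ q) / q with hf1
  set f2 : ℝ → ℝ := fun x => ((x - a) ^ q - (x - s) ^ q) / q with hf2
  set β : ℝ → ℝ := fun x => if x < s then f1 x else f2 x with hβ
  have hif1 : IntervalIntegrable f1 volume a s :=
    ((ii_rpow_left hq' b a s).sub (ii_rpow_left hq' s a s)).div_const q
  have hif2 : IntervalIntegrable f2 volume s b :=
    ((ii_rpow_right hq' a s b).sub (ii_rpow_right hq' s s b)).div_const q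
  have hI1 : IntegrableOn f1 (Ioc a s) :=
    (intervalIntegrable_iff_integrableOn_Ioc_of_le has.le).mp hif1
  have hI2 : IntegrableOn f2 (Ioc s b) :=
    (intervalIntegrable_iff_integrableOn_Ioc_of_le hsb).mp hif2
  -- a.e. equality of β with f1 on Ioc a s
  have hane : ∀ᵐ x : ℝ ∂volume, x ≠ s := by
    refine ae_iff.2 ?_
    have hset : {x : ℝ | ¬ x ≠ s} = {s} := by ext x; simp
    rw [hset]; exact Real.volume_singleton
  have hae1 : β =ᵐ[volume.restrict (Ioc a s)] f1 := by
    filter_upwards [ae_restrict_mem measurableSet_Ioc, ae_restrict_of_ae hane] with x hx hxs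
    have : x < s := lt_of_le_of_ne hx.2 hxs
    simp [hβ, this]
  have heq2 : EqOn β f2 (Ioc s b) := by
    intro x hx
    have : ¬ x < s := not_lt.mpr hx.1.le
    simp [hβ, this]
  have hIβ1 : IntegrableOn β (Ioc a s) := hI1.congr hae1.symm
  have hIβ2 : IntegrableOn β (Ioc s b) := hI2.congr ((ae_restrict_mem measurableSet_Ioc).mono fun x hx => (heq2 hx).symm)
  have hsplit : ∫ x in Ioc a b, β x = (∫ x in Ioc a s, β x) + ∫ x in Ioc s b, β x := by
    rw [← Ioc_union_Ioc_eq_Ioc has.le hsb,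
      setIntegral_union (Ioc_disjoint_Ioc_of_le le_rfl) measurableSet_Ioc hIβ1 hIβ2]
  have hv1 : ∫ x in Ioc a s, β x = ((b-a)^p - (b-s)^p)/p/q - ((s-a)^p)/p/q := by
    have hcg : ∀ᵐ x ∂(volume : Measure ℝ), x ∈ Ioc a s → β x = f1 x := by
      filter_upwards [hane] with x hxs hx
      have : x < s := lt_of_le_of_ne hx.2 hxs
      simp [hβ, this]
    rw [setIntegral_congr_ae measurableSet_Ioc hcg, ← intervalIntegral.integral_of_le has.le]
    have : ∫ x in a..s, f1 x = ((∫ x in a..s, (b - x) ^ q) - ∫ x in a..s, (s - x) ^ q) / q := by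
      rw [← intervalIntegral.integral_sub (ii_rpow_left hq' b a s) (ii_rpow_left hq' s a s),
        ← intervalIntegral.integral_div]
    rw [this, int_rpow_left hq', int_rpow_left hq', hqp, sub_self,
      Real.zero_rpow hp0.ne']
    ring
  have hv2 : ∫ x in Ioc s b, β x = ((b-a)^p - (s-a)^p)/p/q - ((b-s)^p)/p/q := by
    rw [setIntegral_congr_fun measurableSet_Ioc heq2, ← intervalIntegral.integral_of_le hsb]
    have : ∫ x in s..b, f2 x = ((∫ x in s..b, (x - a) ^ q) - ∫ x in s..b, (x - s) ^ q) / q := by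
      rw [← intervalIntegral.integral_sub (ii_rpow_right hq' a s b) (ii_rpow_right hq' s s b),
        ← intervalIntegral.integral_div]
    rw [this, int_rpow_right hq', int_rpow_right hq', hqp, sub_self,
      Real.zero_rpow hp0.ne']
    ring
  have hcalc := key_calc (p := p) (u := b - s) (w := s - a)
    (by simp only [hpdef]; linarith) (by simp only [hpdef]; linarith)
    (by linarith) (by linarith)
  have huw : b - s + (s - a) = b - a := by ring
  rw [huw] at hcalc
  have hLh : (b-a)^p ≤ h^p := Real.rpow_le_rpow (by linarith) (by linarith) hp0.le
  rw [hsplit, hv1, hv2]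
  have hend : 2 * ((b-a)^p - (b-s)^p - (s-a)^p) / (p * q) ≤ h ^ p / q := by
    calc 2 * ((b-a)^p - (b-s)^p - (s-a)^p) / (p * q)
        ≤ 2 * (p / 2 * (b-a)^p) / (p * q) := by
          gcongr
          all_goals linarith
      _ = (b-a)^p / q := by field_simp
      _ ≤ h ^ p / q := by gcongr
  calc ((b-a)^p - (b-s)^p)/p/q - ((s-a)^p)/p/q + (((b-a)^p - (s-a)^p)/p/q - ((b-s)^p)/p/q)
      = 2 * ((b-a)^p - (b-s)^p - (s-a)^p) / (p * q) := by field_simp; ring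
    _ ≤ h ^ p / q := hend

lemma inner_bound {r a b s x : ℝ} (hr0 : 0 < r) (hr : r < 1 / 2)
    (hab : a < b) (hs : s ∈ Ioc a b) (hx : x ∈ Ioc a b) :
    ∫⁻ y in Ioc a b,
        ((if min x y < s ∧ s ≤ max x y then 1 else 0) * ENNReal.ofReal (|y - x| ^ (-(2*r))))
      ≤ ENNReal.ofReal (if x < s then ((b - x) ^ (1 - 2*r) - (s - x) ^ (1 - 2*r)) / (1 - 2*r)
          else ((x - a) ^ (1 - 2*r) - (x - s) ^ (1 - 2*r)) / (1 - 2*r)) := by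
  have hq' : (-1:ℝ) < -(2*r) := by linarith
  have hexp : -(2*r) + 1 = 1 - 2*r := by ring
  by_cases hxs : x < s
  · have hfun : ∀ y : ℝ, ((if min x y < s ∧ s ≤ max x y then (1:ℝ≥0∞) else 0)
        * ENNReal.ofReal (|y - x| ^ (-(2*r))))
        = (Ici s).indicator (fun y => ENNReal.ofReal ((y - x) ^ (-(2*r)))) y := by
      intro y
      by_cases hy : s ≤ y
      · rw [if_pos ⟨lt_of_le_of_lt (min_le_left x y) hxs, le_trans hy (le_max_right x y)⟩,
          one_mul, indicator_of_mem (by simpa using hy)]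
        congr 1
        rw [abs_of_nonneg (by linarith [lt_of_lt_of_le hxs hy] : (0:ℝ) ≤ y - x)]
      · have hy' : y < s := not_le.mp hy
        have hcond : ¬(min x y < s ∧ s ≤ max x y) := by
          rintro ⟨_, h2⟩
          rcases max_cases x y with ⟨he, _⟩ | ⟨he, _⟩ <;> rw [he] at h2 <;> linarith
        rw [if_neg hcond, zero_mul, indicator_of_notMem (by simpa using hy')]
    simp_rw [hfun]
    rw [lintegral_indicator measurableSet_Ici, Measure.restrict_restrict measurableSet_Ici]
    have hset : Ici s ∩ Ioc a b = Icc s b := by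
      ext y
      simp only [Set.mem_inter_iff, Set.mem_Ici, Set.mem_Ioc, Set.mem_Icc]
      exact ⟨fun ⟨h1, _, h3⟩ => ⟨h1, h3⟩, fun ⟨h1, h2⟩ => ⟨h1, lt_of_lt_of_le hs.1 h1, h2⟩⟩
    rw [hset]
    have hInt : IntegrableOn (fun y => (y - x) ^ (-(2*r))) (Icc s b) :=
      (integrableOn_Icc_iff_integrableOn_Ioc enorm_ne_top).2
        ((intervalIntegrable_iff_integrableOn_Ioc_of_le hs.2).mp (ii_rpow_right hq' x s b))
    have hnn : 0 ≤ᵐ[volume.restrict (Icc s b)] fun y => (y - x) ^ (-(2*r)) := by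
      filter_upwards [ae_restrict_mem measurableSet_Icc] with y hy
      exact Real.rpow_nonneg (by linarith [hy.1] : (0:ℝ) ≤ y - x) _
    rw [← ofReal_integral_eq_lintegral_ofReal hInt hnn]
    apply ENNReal.ofReal_le_ofReal
    rw [integral_Icc_eq_integral_Ioc, ← intervalIntegral.integral_of_le hs.2,
      int_rpow_right hq', if_pos hxs, hexp]
  · have hsx : s ≤ x := not_lt.mp hxs
    have hfun : ∀ y : ℝ, ((if min x y < s ∧ s ≤ max x y then (1:ℝ≥0∞) else 0)
        * ENNReal.ofReal (|y - x| ^ (-(2*r))))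
        = (Iio s).indicator (fun y => ENNReal.ofReal ((x - y) ^ (-(2*r)))) y := by
      intro y
      by_cases hy : y < s
      · rw [if_pos ⟨lt_of_le_of_lt (min_le_right x y) hy, le_trans hsx (le_max_left x y)⟩,
          one_mul, indicator_of_mem (by simpa using hy)]
        congr 1
        rw [abs_of_nonpos (by linarith : y - x ≤ 0), neg_sub]
      · have hy' : s ≤ y := not_lt.mp hy
        have hcond : ¬(min x y < s ∧ s ≤ max x y) := by
          rintro ⟨h1, _⟩
          rcases min_cases x y with ⟨he, _⟩ | ⟨he, _⟩ <;> rw [he] at h1 <;> linarith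
        rw [if_neg hcond, zero_mul, indicator_of_notMem (by simpa using hy')]
    simp_rw [hfun]
    rw [lintegral_indicator measurableSet_Iio, Measure.restrict_restrict measurableSet_Iio]
    have hset : Iio s ∩ Ioc a b = Ioo a s := by
      ext y
      simp only [Set.mem_inter_iff, Set.mem_Iio, Set.mem_Ioc, Set.mem_Ioo]
      exact ⟨fun ⟨h1, h2, _⟩ => ⟨h2, h1⟩, fun ⟨h1, h2⟩ => ⟨h2, h1, le_trans h2.le hs.2⟩⟩
    rw [hset]
    have hInt : IntegrableOn (fun y => (x - y) ^ (-(2*r))) (Ioo a s) :=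
      (((intervalIntegrable_iff_integrableOn_Ioc_of_le hs.1.le).mp
        (ii_rpow_left hq' x a s))).mono_set Ioo_subset_Ioc_self
    have hnn : 0 ≤ᵐ[volume.restrict (Ioo a s)] fun y => (x - y) ^ (-(2*r)) := by
      filter_upwards [ae_restrict_mem measurableSet_Ioo] with y hy
      exact Real.rpow_nonneg (by linarith [hy.2] : (0:ℝ) ≤ x - y) _
    rw [← ofReal_integral_eq_lintegral_ofReal hInt hnn]
    apply ENNReal.ofReal_le_ofReal
    rw [← integral_Ioc_eq_integral_Ioo, ← intervalIntegral.integral_of_le hs.1.le,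
      int_rpow_left hq', if_neg hxs, hexp]

lemma W_lin {r h a b s : ℝ} (hr0 : 0 < r) (hr : r < 1 / 2) (hh : 0 < h)
    (hab : a < b) (hba : b - a ≤ h) (hs : s ∈ Ioc a b) :
    ∫⁻ x in Ioc a b, ∫⁻ y in Ioc a b,
        ((if min x y < s ∧ s ≤ max x y then 1 else 0) * ENNReal.ofReal (|y - x| ^ (-(2*r))))
      ≤ ENNReal.ofReal (h ^ (2 - 2*r) / (1 - 2*r)) := by
  obtain ⟨has, hsb⟩ := hs
  have hq0 : (0:ℝ) < 1 - 2*r := by linarith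
  have hq' : (-1:ℝ) < 1 - 2*r := by linarith
  set β : ℝ → ℝ := fun x => if x < s then ((b - x) ^ (1 - 2*r) - (s - x) ^ (1 - 2*r)) / (1 - 2*r)
      else ((x - a) ^ (1 - 2*r) - (x - s) ^ (1 - 2*r)) / (1 - 2*r) with hβ
  have hane : ∀ᵐ x : ℝ ∂volume, x ≠ s := by
    refine ae_iff.2 ?_
    have hset : {x : ℝ | ¬ x ≠ s} = {s} := by ext x; simp
    rw [hset]; exact Real.volume_singleton
  have hIβ1 : IntegrableOn β (Ioc a s) := by
    have hI1 : IntegrableOn (fun x => ((b - x) ^ (1 - 2*r) - (s - x) ^ (1 - 2*r)) / (1 - 2*r))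
        (Ioc a s) := (intervalIntegrable_iff_integrableOn_Ioc_of_le has.le).mp
      (((ii_rpow_left hq' b a s).sub (ii_rpow_left hq' s a s)).div_const _)
    refine hI1.congr ?_
    filter_upwards [ae_restrict_mem measurableSet_Ioc, ae_restrict_of_ae hane] with x hx hxs
    have : x < s := lt_of_le_of_ne hx.2 hxs
    simp [hβ, this]
  have hIβ2 : IntegrableOn β (Ioc s b) := by
    have hI2 : IntegrableOn (fun x => ((x - a) ^ (1 - 2*r) - (x - s) ^ (1 - 2*r)) / (1 - 2*r))
        (Ioc s b) := (intervalIntegrable_iff_integrableOn_Ioc_of_le hsb).mp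
      (((ii_rpow_right hq' a s b).sub (ii_rpow_right hq' s s b)).div_const _)
    refine hI2.congr ?_
    filter_upwards [ae_restrict_mem measurableSet_Ioc] with x hx
    have : ¬ x < s := not_lt.mpr hx.1.le
    simp [hβ, this]
  have hIβ : IntegrableOn β (Ioc a b) := by
    rw [← Ioc_union_Ioc_eq_Ioc has.le hsb]
    exact hIβ1.union hIβ2
  have hβnn : 0 ≤ᵐ[volume.restrict (Ioc a b)] β := by
    filter_upwards [ae_restrict_mem measurableSet_Ioc] with x hx
    by_cases hxs : x < s
    · simp only [hβ, if_pos hxs]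
      apply div_nonneg _ hq0.le
      have := Real.rpow_le_rpow (by linarith : (0:ℝ) ≤ s - x)
        (by linarith [hx.2] : s - x ≤ b - x) hq0.le
      linarith
    · simp only [hβ, if_neg hxs]
      apply div_nonneg _ hq0.le
      have hsx : s ≤ x := not_lt.mp hxs
      have := Real.rpow_le_rpow (by linarith : (0:ℝ) ≤ x - s)
        (by linarith : x - s ≤ x - a) hq0.le
      linarith
  calc ∫⁻ x in Ioc a b, ∫⁻ y in Ioc a b,
        ((if min x y < s ∧ s ≤ max x y then 1 else 0) * ENNReal.ofReal (|y - x| ^ (-(2*r))))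
      ≤ ∫⁻ x in Ioc a b, ENNReal.ofReal (β x) := by
        refine lintegral_mono_ae ?_
        filter_upwards [ae_restrict_mem measurableSet_Ioc] with x hx
        exact inner_bound hr0 hr hab ⟨has, hsb⟩ hx
    _ = ENNReal.ofReal (∫ x in Ioc a b, β x) :=
        (ofReal_integral_eq_lintegral_ofReal hIβ hβnn).symm
    _ ≤ ENNReal.ofReal (h ^ (2 - 2*r) / (1 - 2*r)) :=
        ENNReal.ofReal_le_ofReal (W_real hr0 hr hh hab hba ⟨has, hsb⟩)

lemma meas_abs_rpow (c : ℝ) : Measurable fun t : ℝ => |t| ^ c := by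
  have h : ∀ t : ℝ, |t| ^ c = if t = 0 then (0:ℝ) ^ c else Real.exp (Real.log |t| * c) := by
    intro t
    by_cases ht : t = 0
    · simp [ht]
    · rw [if_neg ht, Real.rpow_def_of_pos (abs_pos.mpr ht)]
  simp_rw [h]
  exact Measurable.ite (by simp [Set.setOf_eq_eq_singleton]) measurable_const
    (Real.measurable_exp.comp ((Real.measurable_log.comp measurable_abs).mul_const c))

lemma key_interval (r h : ℝ) (hr0 : 0 < r) (hr : r < 1 / 2) (hh : 0 < h)
    (a b : ℝ) (hab : a < b) (hba : b - a ≤ h)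
    (v g : ℝ → ℝ)
    (hg : IntegrableOn g (Icc a b))
    (hg2 : IntegrableOn (fun s => g s ^ 2) (Icc a b))
    (hv : ∀ p ∈ Icc a b, ∀ q ∈ Icc a b, v q - v p = ∫ s in p..q, g s) :
    ∫ x in a..b, ∫ y in a..b, |v y - v x| ^ 2 / |y - x| ^ (1 + 2 * r) ≤
      (1 / (1 - 2 * r)) * h ^ (2 - 2 * r) * ∫ s in a..b, g s ^ 2 := by
  have hq0 : (0:ℝ) < 1 - 2*r := by linarith
  -- primitive
  set g₀ : ℝ → ℝ := (Icc a b).indicator g with hg₀def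
  have hg₀ : Integrable g₀ volume := hg.integrable_indicator measurableSet_Icc
  set Ψ : ℝ → ℝ := fun u => ∫ t in a..u, g₀ t with hΨdef
  have hΨc : Continuous Ψ :=
    intervalIntegral.continuous_primitive (fun c d => hg₀.intervalIntegrable) a
  have hΨdiff : ∀ x ∈ Icc a b, ∀ y ∈ Icc a b, Ψ y - Ψ x = ∫ s in x..y, g s := by
    intro x hx y hy
    have h1 : Ψ y - Ψ x = ∫ s in x..y, g₀ s :=
      intervalIntegral.integral_interval_sub_left hg₀.intervalIntegrable
        hg₀.intervalIntegrable
    rw [h1]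
    apply intervalIntegral.integral_congr
    intro s hs
    have hsub : uIcc x y ⊆ Icc a b := by
      rw [Set.uIcc]
      exact Icc_subset_Icc (le_min hx.1 hy.1) (max_le hx.2 hy.2)
    exact indicator_of_mem (hsub hs) g
  set F : ℝ → ℝ → ℝ := fun x y => (Ψ y - Ψ x) ^ 2 / |y - x| ^ (1 + 2*r) with hFdef
  have hFnn : ∀ x y, 0 ≤ F x y := fun x y =>
    div_nonneg (sq_nonneg _) (Real.rpow_nonneg (abs_nonneg _) _)
  have hcongr : ∫ x in a..b, ∫ y in a..b, |v y - v x| ^ 2 / |y - x| ^ (1 + 2 * r)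
      = ∫ x in a..b, ∫ y in a..b, F x y := by
    apply intervalIntegral.integral_congr
    intro x hx
    rw [uIcc_of_le hab.le] at hx
    apply intervalIntegral.integral_congr
    intro y hy
    rw [uIcc_of_le hab.le] at hy
    simp only [hFdef]
    rw [sq_abs, hv x hx y hy, ← hΨdiff x hx y hy]
  rw [hcongr]
  -- measurability of F
  have hFm : Measurable (fun z : ℝ × ℝ => F z.1 z.2) := by
    apply Measurable.div
    · exact (((hΨc.comp continuous_snd).sub (hΨc.comp continuous_fst)).measurable).pow_const 2
    · exact (meas_abs_rpow (1 + 2*r)).comp (measurable_snd.sub measurable_fst)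
  -- measurable representative of g^2
  have hmk := hg2.aestronglyMeasurable
  set G2 : ℝ → ℝ := hmk.mk _ with hG2def
  have hG2m : Measurable G2 := hmk.stronglyMeasurable_mk.measurable
  have hG2ae : (fun s => g s ^ 2) =ᵐ[volume.restrict (Icc a b)] G2 := hmk.ae_eq_mk
  have hG2aeI : (fun s => g s ^ 2) =ᵐ[volume.restrict (Ioc a b)] G2 :=
    ae_restrict_of_ae_restrict_of_subset Ioc_subset_Icc_self hG2ae
  -- the kernel K
  set K : ℝ → ℝ → ℝ → ℝ≥0∞ := fun x y s =>
    (if min x y < s ∧ s ≤ max x y then 1 else 0) * ENNReal.ofReal (|y - x| ^ (-(2*r))) with hKdef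
  -- pointwise bound
  have hptwise : ∀ x ∈ Ioc a b, ∀ y ∈ Ioc a b, ENNReal.ofReal (F x y) ≤
      ∫⁻ s in Ioc a b, ENNReal.ofReal (G2 s) * K x y s := by
    intro x hx y hy
    rcases eq_or_ne x y with rfl | hxy
    · simp [hFdef, sub_self]
    set m : ℝ := min x y with hmdef
    set M : ℝ := max x y with hMdef
    have hz : (0:ℝ) < M - m := sub_pos.mpr (min_lt_max.mpr hxy)
    have ham : a < m := lt_min hx.1 hy.1
    have hMb : M ≤ b := max_le hx.2 hy.2
    have hIocsub : Ioc m M ⊆ Ioc a b := Ioc_subset_Ioc ham.le hMb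
    have hIccsub : Ioc m M ⊆ Icc a b := hIocsub.trans Ioc_subset_Icc_self
    have habs : |y - x| = M - m := by
      rw [hMdef, hmdef, max_comm x y, min_comm x y, ← abs_sub_comm x y]
      exact (max_sub_min_eq_abs y x).symm
    have hxI : x ∈ Icc a b := ⟨hx.1.le, hx.2⟩
    have hyI : y ∈ Icc a b := ⟨hy.1.le, hy.2⟩
    have hnum : (Ψ y - Ψ x) ^ 2 = (∫ s in Ioc m M, g s) ^ 2 := by
      rcases le_total x y with hxy' | hxy'
      · rw [hΨdiff x hxI y hyI, intervalIntegral.integral_of_le hxy', hmdef, hMdef,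
          min_eq_left hxy', max_eq_right hxy']
      · have hsq : (Ψ y - Ψ x) ^ 2 = (Ψ x - Ψ y) ^ 2 := by ring
        rw [hsq, hΨdiff y hyI x hxI, intervalIntegral.integral_of_le hxy', hmdef, hMdef,
          min_eq_right hxy', max_eq_left hxy']
    set B : ℝ := ∫ s in Ioc m M, g s ^ 2 with hBdef
    have hBnn : 0 ≤ B := integral_nonneg fun s => sq_nonneg _
    have hCS : (∫ s in Ioc m M, g s) ^ 2 ≤ (M - m) * B :=
      cs_Ioc (by linarith : m ≤ M) (hg.mono_set hIccsub) (hg2.mono_set hIccsub)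
    have hF_le : F x y ≤ B * (M - m) ^ (-(2*r)) := by
      have hden : |y - x| ^ (1 + 2*r) = (M - m) * (M - m) ^ (2*r) := by
        rw [habs, Real.rpow_add hz, Real.rpow_one]
      calc F x y = (∫ s in Ioc m M, g s) ^ 2 / ((M - m) * (M - m) ^ (2*r)) := by
            rw [hFdef]; simp only; rw [hnum, hden]
        _ ≤ ((M - m) * B) / ((M - m) * (M - m) ^ (2*r)) := by
            have hpos : (0:ℝ) < (M - m) * (M - m) ^ (2*r) :=
              mul_pos hz (Real.rpow_pos_of_pos hz _)
            exact div_le_div_of_nonneg_right hCS hpos.le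
        _ = B * (M - m) ^ (-(2*r)) := by
            rw [mul_div_mul_left _ _ (ne_of_gt hz), Real.rpow_neg hz.le, div_eq_mul_inv]
    have hBeq : ENNReal.ofReal B = ∫⁻ s in Ioc m M, ENNReal.ofReal (G2 s) := by
      rw [ofReal_integral_eq_lintegral_ofReal (hg2.mono_set hIccsub)
        (Filter.Eventually.of_forall fun s => sq_nonneg _)]
      apply lintegral_congr_ae
      have := ae_restrict_of_ae_restrict_of_subset hIccsub hG2ae
      exact this.mono fun s hs => by simp only at hs; simp only [hs]
    have hIndic : ∀ s : ℝ, (Ioc m M).indicator (fun s => ENNReal.ofReal (G2 s)) s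
        * ENNReal.ofReal ((M - m) ^ (-(2*r)))
        = ENNReal.ofReal (G2 s) * K x y s := by
      intro s
      by_cases hs : s ∈ Ioc m M
      · rw [indicator_of_mem hs]
        rw [hKdef]; simp only
        rw [if_pos ⟨hs.1, hs.2⟩, one_mul, habs]
      · rw [indicator_of_notMem hs, zero_mul]
        rw [hKdef]; simp only
        rw [Set.mem_Ioc, not_and_or] at hs
        have : ¬(m < s ∧ s ≤ M) := by tauto
        rw [if_neg this, zero_mul, mul_zero]
    calc ENNReal.ofReal (F x y) ≤ ENNReal.ofReal (B * (M - m) ^ (-(2*r))) :=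
          ENNReal.ofReal_le_ofReal hF_le
      _ = ENNReal.ofReal B * ENNReal.ofReal ((M - m) ^ (-(2*r))) := ENNReal.ofReal_mul hBnn
      _ = (∫⁻ s in Ioc m M, ENNReal.ofReal (G2 s)) * ENNReal.ofReal ((M - m) ^ (-(2*r))) := by
          rw [hBeq]
      _ = (∫⁻ s in Ioc a b, (Ioc m M).indicator (fun s => ENNReal.ofReal (G2 s)) s)
            * ENNReal.ofReal ((M - m) ^ (-(2*r))) := by
          rw [lintegral_indicator measurableSet_Ioc, Measure.restrict_restrict measurableSet_Ioc,
            inter_eq_self_of_subset_left hIocsub]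
      _ = ∫⁻ s in Ioc a b, (Ioc m M).indicator (fun s => ENNReal.ofReal (G2 s)) s
            * ENNReal.ofReal ((M - m) ^ (-(2*r))) := by
          rw [lintegral_mul_const' _ _ ENNReal.ofReal_ne_top]
      _ = ∫⁻ s in Ioc a b, ENNReal.ofReal (G2 s) * K x y s := by
          apply lintegral_congr
          intro s
          exact hIndic s
  -- continue
  have hKm : Measurable (fun p : (ℝ × ℝ) × ℝ => K p.1.1 p.2 p.1.2) := by
    rw [hKdef]
    apply Measurable.mul
    · refine Measurable.ite ?_ measurable_const measurable_const
      exact (measurableSet_lt ((measurable_fst.fst).min measurable_snd) measurable_fst.snd).inter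
        (measurableSet_le measurable_fst.snd ((measurable_fst.fst).max measurable_snd))
    · exact ENNReal.measurable_ofReal.comp
        ((meas_abs_rpow _).comp (measurable_snd.sub measurable_fst.fst))
  have haem1 : ∀ x : ℝ, AEMeasurable
      (Function.uncurry fun y s => ENNReal.ofReal (G2 s) * K x y s)
      ((volume.restrict (Ioc a b)).prod (volume.restrict (Ioc a b))) := by
    intro x
    apply Measurable.aemeasurable
    apply Measurable.mul
    · exact ENNReal.measurable_ofReal.comp (hG2m.comp measurable_snd)
    · rw [hKdef]
      apply Measurable.mul
      · exact Measurable.ite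
          ((measurableSet_lt (measurable_const.min measurable_fst) measurable_snd).inter
            (measurableSet_le measurable_snd (measurable_const.max measurable_fst)))
          measurable_const measurable_const
      · exact ENNReal.measurable_ofReal.comp
          ((meas_abs_rpow _).comp (measurable_fst.sub measurable_const))
  have haem2 : AEMeasurable
      (Function.uncurry fun x s => ENNReal.ofReal (G2 s) * ∫⁻ y in Ioc a b, K x y s)
      ((volume.restrict (Ioc a b)).prod (volume.restrict (Ioc a b))) := by
    apply Measurable.aemeasurable
    exact (ENNReal.measurable_ofReal.comp (hG2m.comp measurable_snd)).mul
      (Measurable.lintegral_prod_right' hKm)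
  set GIoc : ℝ := ∫ s in Ioc a b, g s ^ 2 with hGIocdef
  have hGInn : 0 ≤ GIoc := integral_nonneg fun s => sq_nonneg _
  set C : ℝ := GIoc * (h ^ (2 - 2*r) / (1 - 2*r)) with hCdef
  have hCnn : 0 ≤ C :=
    mul_nonneg hGInn (div_nonneg (Real.rpow_nonneg hh.le _) hq0.le)
  have hLinle : (∫⁻ x in Ioc a b, ∫⁻ y in Ioc a b, ENNReal.ofReal (F x y))
      ≤ ENNReal.ofReal C := by
    calc ∫⁻ x in Ioc a b, ∫⁻ y in Ioc a b, ENNReal.ofReal (F x y)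
        ≤ ∫⁻ x in Ioc a b, ∫⁻ y in Ioc a b, ∫⁻ s in Ioc a b,
            ENNReal.ofReal (G2 s) * K x y s := by
          refine lintegral_mono_ae ?_
          filter_upwards [ae_restrict_mem measurableSet_Ioc] with x hx
          refine lintegral_mono_ae ?_
          filter_upwards [ae_restrict_mem measurableSet_Ioc] with y hy
          exact hptwise x hx y hy
      _ = ∫⁻ x in Ioc a b, ∫⁻ s in Ioc a b, ∫⁻ y in Ioc a b,
            ENNReal.ofReal (G2 s) * K x y s := by
          apply lintegral_congr
          intro x
          exact lintegral_lintegral_swap (haem1 x)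
      _ = ∫⁻ x in Ioc a b, ∫⁻ s in Ioc a b,
            ENNReal.ofReal (G2 s) * ∫⁻ y in Ioc a b, K x y s := by
          apply lintegral_congr; intro x
          apply lintegral_congr; intro s
          exact lintegral_const_mul' _ _ ENNReal.ofReal_ne_top
      _ = ∫⁻ s in Ioc a b, ∫⁻ x in Ioc a b,
            ENNReal.ofReal (G2 s) * ∫⁻ y in Ioc a b, K x y s :=
          lintegral_lintegral_swap haem2
      _ = ∫⁻ s in Ioc a b, ENNReal.ofReal (G2 s)
            * ∫⁻ x in Ioc a b, ∫⁻ y in Ioc a b, K x y s := by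
          apply lintegral_congr; intro s
          exact lintegral_const_mul' _ _ ENNReal.ofReal_ne_top
      _ ≤ ∫⁻ s in Ioc a b, ENNReal.ofReal (G2 s)
            * ENNReal.ofReal (h ^ (2 - 2*r) / (1 - 2*r)) := by
          refine lintegral_mono_ae ?_
          filter_upwards [ae_restrict_mem measurableSet_Ioc] with s hs
          exact mul_le_mul_right (W_lin hr0 hr hh hab hba hs) _
      _ = (∫⁻ s in Ioc a b, ENNReal.ofReal (G2 s))
            * ENNReal.ofReal (h ^ (2 - 2*r) / (1 - 2*r)) :=
          lintegral_mul_const' _ _ ENNReal.ofReal_ne_top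
      _ = ENNReal.ofReal GIoc * ENNReal.ofReal (h ^ (2 - 2*r) / (1 - 2*r)) := by
          congr 1
          rw [hGIocdef, ofReal_integral_eq_lintegral_ofReal (hg2.mono_set Ioc_subset_Icc_self)
            (Filter.Eventually.of_forall fun s => sq_nonneg _)]
          exact lintegral_congr_ae (hG2aeI.mono fun s hs => by
            simp only at hs; simp only [hs])
      _ = ENNReal.ofReal C := by rw [hCdef, ENNReal.ofReal_mul hGInn]
  -- convert the real double integral
  rw [intervalIntegral.integral_of_le hab.le]
  simp only [intervalIntegral.integral_of_le hab.le]
  have hinner : ∀ x : ℝ, (∫ y in Ioc a b, F x y)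
      = (∫⁻ y in Ioc a b, ENNReal.ofReal (F x y)).toReal := fun x =>
    integral_eq_lintegral_of_nonneg_ae (Filter.Eventually.of_forall fun y => hFnn x y)
      ((hFm.comp measurable_prodMk_left).aestronglyMeasurable)
  simp only [hinner]
  have hm2 : AEStronglyMeasurable
      (fun x => (∫⁻ y in Ioc a b, ENNReal.ofReal (F x y)).toReal)
      (volume.restrict (Ioc a b)) := by
    apply Measurable.aestronglyMeasurable
    apply Measurable.ennreal_toReal
    exact Measurable.lintegral_prod_right'
      (f := fun z : ℝ × ℝ => ENNReal.ofReal (F z.1 z.2))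
      (ENNReal.measurable_ofReal.comp hFm)
  rw [integral_eq_lintegral_of_nonneg_ae
    (Filter.Eventually.of_forall fun x => ENNReal.toReal_nonneg) hm2]
  have hmain : (∫⁻ x in Ioc a b,
      ENNReal.ofReal ((∫⁻ y in Ioc a b, ENNReal.ofReal (F x y)).toReal))
      ≤ ENNReal.ofReal C := by
    refine le_trans (lintegral_mono fun x => ENNReal.ofReal_toReal_le) hLinle
  have hfin := ENNReal.toReal_mono (ENNReal.ofReal_ne_top) hmain
  rw [ENNReal.toReal_ofReal hCnn] at hfin
  calc (∫⁻ x in Ioc a b,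
      ENNReal.ofReal ((∫⁻ y in Ioc a b, ENNReal.ofReal (F x y)).toReal)).toReal
      ≤ C := hfin
    _ = 1 / (1 - 2 * r) * h ^ (2 - 2 * r) * GIoc := by rw [hCdef]; ring

/-- Diagonal terms bound in Lemma 1: for a partition `0 = t₀ < ⋯ < t_N = 1`
with subintervals of length at most `h`, and `v` absolutely continuous with
square-integrable derivative `g`,
`∑ᵢ ∬_{γᵢ×γᵢ} |v y - v x|² / |y - x|^(1+2r) ≤ (1/(1-2r)) h^(2-2r) ∫₀¹ g²`. -/
theorem diagonal_terms_bound (r h : ℝ) (hr0 : 0 < r) (hr : r < 1 / 2) (hh : 0 < h)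
    (N : ℕ) (t : ℕ → ℝ) (ht0 : t 0 = 0) (htN : t N = 1)
    (hmono : ∀ i < N, t i < t (i + 1))
    (hlen : ∀ i < N, t (i + 1) - t i ≤ h)
    (v g : ℝ → ℝ)
    (hg_int : IntegrableOn g (Icc (0:ℝ) 1))
    (hg_sq : IntegrableOn (fun s => g s ^ 2) (Icc (0:ℝ) 1))
    (hv : ∀ p ∈ Icc (0:ℝ) 1, ∀ q ∈ Icc (0:ℝ) 1, v q - v p = ∫ s in p..q, g s) :
    ∑ i ∈ Finset.range N,
        ∫ x in t i..t (i + 1), ∫ y in t i..t (i + 1),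
          |v y - v x| ^ 2 / |y - x| ^ (1 + 2 * r) ≤
      (1 / (1 - 2 * r)) * h ^ (2 - 2 * r) * ∫ s in (0:ℝ)..1, g s ^ 2 := by
  have hq0 : (0:ℝ) < 1 - 2*r := by linarith
  -- monotonicity of the partition points
  have hmono' : ∀ j ≤ N, ∀ i ≤ j, t i ≤ t j := by
    intro j
    induction j with
    | zero => intro _ i hi; interval_cases i; exact le_refl _
    | succ n ih =>
      intro hn i hi
      rcases Nat.le_succ_iff.mp hi with hi' | rfl
      · exact le_trans (ih (by omega) i (by omega))
          (hmono n (by omega)).le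
      · exact le_refl _
  have hmem : ∀ i ≤ N, t i ∈ Icc (0:ℝ) 1 := by
    intro i hi
    constructor
    · rw [← ht0]; exact hmono' i hi 0 (Nat.zero_le _)
    · rw [← htN]; exact hmono' N le_rfl i hi
  have hsub : ∀ i < N, Icc (t i) (t (i + 1)) ⊆ Icc (0:ℝ) 1 := by
    intro i hi
    exact Icc_subset_Icc (hmem i hi.le).1 (hmem (i+1) hi).2
  have hkey : ∀ i < N,
      ∫ x in t i..t (i + 1), ∫ y in t i..t (i + 1),
          |v y - v x| ^ 2 / |y - x| ^ (1 + 2 * r) ≤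
        (1 / (1 - 2 * r)) * h ^ (2 - 2 * r) * ∫ s in t i..t (i + 1), g s ^ 2 := by
    intro i hi
    refine key_interval r h hr0 hr hh _ _ (hmono i hi) (hlen i hi) v g
      (hg_int.mono_set (hsub i hi)) (hg_sq.mono_set (hsub i hi)) ?_
    intro p hp q hq
    exact hv p (hsub i hi hp) q (hsub i hi hq)
  have hII : ∀ k < N, IntervalIntegrable (fun s => g s ^ 2) volume (t k) (t (k + 1)) := by
    intro k hk
    apply IntegrableOn.intervalIntegrable
    apply hg_sq.mono_set
    rw [uIcc_of_le (hmono k hk).le]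
    exact hsub k hk
  calc ∑ i ∈ Finset.range N,
        ∫ x in t i..t (i + 1), ∫ y in t i..t (i + 1),
          |v y - v x| ^ 2 / |y - x| ^ (1 + 2 * r)
      ≤ ∑ i ∈ Finset.range N,
          (1 / (1 - 2 * r)) * h ^ (2 - 2 * r) * ∫ s in t i..t (i + 1), g s ^ 2 := by
        apply Finset.sum_le_sum
        intro i hi
        exact hkey i (Finset.mem_range.mp hi)
    _ = (1 / (1 - 2 * r)) * h ^ (2 - 2 * r)
          * ∑ i ∈ Finset.range N, ∫ s in t i..t (i + 1), g s ^ 2 := by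
        rw [Finset.mul_sum]
    _ = (1 / (1 - 2 * r)) * h ^ (2 - 2 * r) * ∫ s in (0:ℝ)..1, g s ^ 2 := by
        rw [intervalIntegral.sum_integral_adjacent_intervals hII, ht0, htN]
end

section
/- Let 0 < r < 1/2, h > 0, and let 0 = t₀ < t₁ < ⋯ < t_N = 1 be a partition of I = (0,1) into subintervals γᵢ = (tᵢ₋₁, tᵢ) each of length at most h. Let v : [0,1] → ℝ be absolutely continuous with square-integrable derivative g, choose points xᵢ ∈ γᵢ, and set w = v − v_h where v_h = ∑_{i=1}^N v(xᵢ) 1_{γᵢ} is the piecewise constant interpolant. Then the extradiagonal sum satisfies ∑_{i=1}^N ∑_{j ≠ i} ∬_{γᵢ × γⱼ} |w(y) − w(x)|² / |y − x|^{1+2r} dx dy ≤ (4/(r(1 − 2r))) · h^{2−2r} · ∫₀¹ g(t)² dt. -/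
open MeasureTheory Set Finset
open MeasureTheory Set Finset intervalIntegral


lemma aux_int_le {f G : ℝ → ℝ} {a b : ℝ} (hab : a ≤ b)
    (hG : IntervalIntegrable G volume a b)
    (h0 : ∀ x ∈ Set.Ioc a b, 0 ≤ f x)
    (hle : ∀ᵐ x ∂(volume.restrict (Set.Ioc a b)), f x ≤ G x) :
    ∫ x in a..b, f x ≤ ∫ x in a..b, G x := by
  rw [intervalIntegral.integral_of_le hab, intervalIntegral.integral_of_le hab]
  have hG' : IntegrableOn G (Set.Ioc a b) :=
    (intervalIntegrable_iff_integrableOn_Ioc_of_le hab).1 hG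
  have h0' : ∀ᵐ x ∂(volume.restrict (Set.Ioc a b)), 0 ≤ f x :=
    (ae_restrict_iff' measurableSet_Ioc).2 (Filter.Eventually.of_forall h0)
  by_cases hf : IntegrableOn f (Set.Ioc a b)
  · exact integral_mono_ae hf hG' hle
  · rw [MeasureTheory.integral_undef hf]
    exact integral_nonneg_of_ae ((h0'.and hle).mono fun x hx => hx.1.trans hx.2)

lemma my_inner_right {q c d x : ℝ} (hq : q + 1 ≠ 0) (hcd : c ≤ d) (hdx : d < x) :
    ∫ y in c..d, (x - y) ^ q = ((x - c) ^ (q + 1) - (x - d) ^ (q + 1)) / (q + 1) := by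
  have hpos : ∀ y ∈ Set.uIcc c d, 0 < x - y := by
    intro y hy
    rw [Set.uIcc_of_le hcd] at hy
    have : y ≤ d := hy.2
    linarith
  have key : ∀ y ∈ Set.uIcc c d,
      HasDerivAt (fun z => -(x - z) ^ (q + 1) / (q + 1)) ((x - y) ^ q) y := by
    intro y hy
    have h1 : HasDerivAt (fun z : ℝ => x - z) (-1) y := by
      simpa using (hasDerivAt_id y).const_sub x
    have h2 : HasDerivAt (fun z : ℝ => (x - z) ^ (q + 1))
        (-1 * (q + 1) * (x - y) ^ (q + 1 - 1)) y :=
      h1.rpow_const (Or.inl (ne_of_gt (hpos y hy)))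
    have h3 := (h2.neg).div_const (q + 1)
    rw [show q + 1 - 1 = q by ring, neg_mul, neg_mul, one_mul, neg_neg,
      mul_div_cancel_left₀ _ hq] at h3
    exact h3
  have hcont : ContinuousOn (fun y => (x - y) ^ q) (Set.uIcc c d) :=
    (continuous_const.sub continuous_id).continuousOn.rpow_const
      fun y hy => Or.inl (ne_of_gt (hpos y hy))
  rw [intervalIntegral.integral_eq_sub_of_hasDerivAt key hcont.intervalIntegrable]
  ring

lemma my_inner_left {q c d x : ℝ} (hq : q + 1 ≠ 0) (hcd : c ≤ d) (hxc : x < c) :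
    ∫ y in c..d, (y - x) ^ q = ((d - x) ^ (q + 1) - (c - x) ^ (q + 1)) / (q + 1) := by
  have h := intervalIntegral.integral_comp_neg (a := c) (b := d) (fun y => ((-x) - y) ^ q)
  have h2 : ∫ y in c..d, (y - x) ^ q = ∫ y in (-d)..(-c), ((-x) - y) ^ q := by
    rw [← h]
    congr 1
    ext y
    ring_nf
  rw [h2, my_inner_right hq (by linarith) (by linarith)]
  ring_nf

lemma my_outer_right {q A B e : ℝ} (hq1 : -1 < q) (hq2 : q < 0) (heA : e ≤ A) (hAB : A ≤ B) :
    ∫ x in A..B, (x - e) ^ q = ((B - e) ^ (q + 1) - (A - e) ^ (q + 1)) / (q + 1) := by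
  have hq : (0:ℝ) < q + 1 := by linarith
  have hcont : ContinuousOn (fun x : ℝ => (x - e) ^ (q + 1) / (q + 1)) (Set.Icc A B) := by
    apply ContinuousOn.div_const
    exact (continuous_id.sub continuous_const).continuousOn.rpow_const
      fun x _ => Or.inr (le_of_lt hq)
  have hderiv : ∀ x ∈ Set.Ioo A B,
      HasDerivWithinAt (fun x : ℝ => (x - e) ^ (q + 1) / (q + 1)) ((x - e) ^ q) (Set.Ioi x) x := by
    intro x hx
    have hxe : (0:ℝ) < x - e := by have := hx.1; linarith
    have h1 : HasDerivAt (fun z : ℝ => z - e) 1 x := by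
      simpa using (hasDerivAt_id x).sub_const e
    have h2 : HasDerivAt (fun z : ℝ => (z - e) ^ (q + 1))
        (1 * (q + 1) * (x - e) ^ (q + 1 - 1)) x :=
      h1.rpow_const (Or.inl (ne_of_gt hxe))
    have h3 := h2.div_const (q + 1)
    have h4 : 1 * (q + 1) * (x - e) ^ (q + 1 - 1) / (q + 1) = (x - e) ^ q := by
      have : q + 1 - 1 = q := by ring
      rw [this]
      field_simp
    rw [h4] at h3
    exact h3.hasDerivWithinAt
  have hint : IntervalIntegrable (fun x : ℝ => (x - e) ^ q) volume A B := by
    have := (intervalIntegral.intervalIntegrable_rpow'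
      (a := A - e) (b := B - e) hq1).comp_sub_right e
    simpa using this
  rw [intervalIntegral.integral_eq_sub_of_hasDeriv_right_of_le hAB hcont hderiv hint]
  ring

lemma my_outer_left {q A B e : ℝ} (hq1 : -1 < q) (hq2 : q < 0) (hBe : B ≤ e) (hAB : A ≤ B) :
    ∫ x in A..B, (e - x) ^ q = ((e - A) ^ (q + 1) - (e - B) ^ (q + 1)) / (q + 1) := by
  have h := intervalIntegral.integral_comp_neg (a := A) (b := B) (fun x => (x - (-e)) ^ q)
  have h2 : ∫ x in A..B, (e - x) ^ q = ∫ x in (-B)..(-A), (x - (-e)) ^ q := by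
    rw [← h]
    congr 1
    ext x
    ring_nf
  rw [h2, my_outer_right hq1 hq2 (by linarith) (by linarith)]
  ring_nf

lemma int_rpow_sub_right {q A B e : ℝ} (hq1 : -1 < q) (he : e ≤ A ∨ True) :
    IntervalIntegrable (fun x : ℝ => (x - e) ^ q) volume A B := by
  have := (intervalIntegral.intervalIntegrable_rpow'
    (a := A - e) (b := B - e) hq1).comp_sub_right e
  simpa using this

/-- Pair bound, case: outer interval `(A,B)` to the right of inner interval `(c,d)`. -/
lemma pair_right {r C A B c d : ℝ} (hr0 : 0 < r) (hr : r < 1/2) (hC : 0 ≤ C)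
    (hcd : c ≤ d) (hdA : d ≤ A) (hAB : A ≤ B)
    {f : ℝ → ℝ → ℝ} (hf0 : ∀ x y, 0 ≤ f x y)
    (hfC : ∀ x ∈ Set.Ioo A B, ∀ y ∈ Set.Ioc c d, f x y ≤ C) :
    ∫ x in A..B, ∫ y in c..d, f x y / |y - x| ^ (1 + 2*r) ≤
      C / (2*r*(1-2*r)) *
        (((B - d) ^ (1-2*r) - (A - d) ^ (1-2*r)) -
          ((B - c) ^ (1-2*r) - (A - c) ^ (1-2*r))) := by
  have hq1 : (-1:ℝ) < -(2*r) := by linarith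
  have hq2 : -(2*r) < (0:ℝ) := by linarith
  set Ψ : ℝ → ℝ := fun x => C / (2*r) * ((x - d) ^ (-(2*r)) - (x - c) ^ (-(2*r))) with hΨ
  have hΨint : IntervalIntegrable Ψ volume A B := by
    exact (((int_rpow_sub_right hq1 (Or.inr trivial)).sub
      (int_rpow_sub_right hq1 (Or.inr trivial))).const_mul _)
  have step1 : ∫ x in A..B, ∫ y in c..d, f x y / |y - x| ^ (1 + 2*r) ≤ ∫ x in A..B, Ψ x := by
    apply aux_int_le hAB hΨint
    · intro x _
      apply intervalIntegral.integral_nonneg hcd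
      intro y _
      exact div_nonneg (hf0 x y) (Real.rpow_nonneg (abs_nonneg _) _)
    · rw [← Measure.restrict_congr_set Ioo_ae_eq_Ioc]
      apply ae_restrict_of_forall_mem measurableSet_Ioo
      intro x hx
      have hAx : A < x := hx.1
      -- inner estimate
      have inner1 : ∫ y in c..d, f x y / |y - x| ^ (1 + 2*r) ≤
          ∫ y in c..d, C * (x - y) ^ (-(1 + 2*r)) := by
        apply aux_int_le hcd
        · apply IntervalIntegrable.const_mul
          apply ContinuousOn.intervalIntegrable
          apply ContinuousOn.rpow_const (continuous_const.sub continuous_id).continuousOn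
          intro y hy
          rw [Set.uIcc_of_le hcd] at hy
          have : y ≤ d := hy.2
          exact Or.inl (ne_of_gt (by linarith : (0:ℝ) < x - y))
        · intro y _
          exact div_nonneg (hf0 x y) (Real.rpow_nonneg (abs_nonneg _) _)
        · apply ae_restrict_of_forall_mem measurableSet_Ioc
          intro y hy
          have hyx : 0 < x - y := by have := hy.2; linarith
          have habs : |y - x| = x - y := by rw [abs_sub_comm]; exact abs_of_pos hyx
          rw [habs, Real.rpow_neg (le_of_lt hyx), div_eq_mul_inv]
          exact mul_le_mul_of_nonneg_right (hfC x hx y hy)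
            (inv_nonneg.2 (Real.rpow_nonneg (le_of_lt hyx) _))
      have inner2 : ∫ y in c..d, C * (x - y) ^ (-(1 + 2*r)) = Ψ x := by
        rw [intervalIntegral.integral_const_mul,
          my_inner_right (by simp; linarith) hcd (by linarith)]
        rw [show -(1 + 2*r) + 1 = -(2*r) by ring, hΨ]
        field_simp
        ring
      calc ∫ y in c..d, f x y / |y - x| ^ (1 + 2*r) ≤
            ∫ y in c..d, C * (x - y) ^ (-(1 + 2*r)) := inner1
        _ = Ψ x := inner2
  have step2 : ∫ x in A..B, Ψ x = C / (2*r*(1-2*r)) *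
      (((B - d) ^ (1-2*r) - (A - d) ^ (1-2*r)) -
        ((B - c) ^ (1-2*r) - (A - c) ^ (1-2*r))) := by
    rw [hΨ]
    rw [intervalIntegral.integral_const_mul]
    rw [intervalIntegral.integral_sub (int_rpow_sub_right hq1 (Or.inr trivial))
      (int_rpow_sub_right hq1 (Or.inr trivial))]
    rw [my_outer_right hq1 hq2 hdA hAB, my_outer_right hq1 hq2 (by linarith) hAB]
    rw [show -(2*r) + 1 = 1 - 2*r by ring]
    have hp : (1 - 2*r) ≠ 0 := by intro hc; rw [sub_eq_zero] at hc; linarith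
    field_simp
  rw [step2] at step1
  exact step1

lemma int_rpow_sub_left {q A B e : ℝ} (hq1 : -1 < q) :
    IntervalIntegrable (fun x : ℝ => (e - x) ^ q) volume A B := by
  have h1 : IntervalIntegrable (fun x : ℝ => (x - (-e)) ^ q) volume (-A) (-B) :=
    int_rpow_sub_right hq1 (Or.inr trivial)
  have h2 := (IntervalIntegrable.iff_comp_neg).1 h1
  simp only [neg_neg] at h2
  convert h2 using 2 with x
  ring_nf

/-- Pair bound, case: outer interval `(A,B)` to the left of inner interval `(c,d)`. -/
lemma pair_left {r C A B c d : ℝ} (hr0 : 0 < r) (hr : r < 1/2) (hC : 0 ≤ C)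
    (hcd : c ≤ d) (hBc : B ≤ c) (hAB : A ≤ B)
    {f : ℝ → ℝ → ℝ} (hf0 : ∀ x y, 0 ≤ f x y)
    (hfC : ∀ x ∈ Set.Ioo A B, ∀ y ∈ Set.Ioc c d, f x y ≤ C) :
    ∫ x in A..B, ∫ y in c..d, f x y / |y - x| ^ (1 + 2*r) ≤
      C / (2*r*(1-2*r)) *
        (((c - A) ^ (1-2*r) - (c - B) ^ (1-2*r)) -
          ((d - A) ^ (1-2*r) - (d - B) ^ (1-2*r))) := by
  have hq1 : (-1:ℝ) < -(2*r) := by linarith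
  have hq2 : -(2*r) < (0:ℝ) := by linarith
  set Ψ : ℝ → ℝ := fun x => C / (2*r) * ((c - x) ^ (-(2*r)) - (d - x) ^ (-(2*r))) with hΨ
  have hΨint : IntervalIntegrable Ψ volume A B :=
    ((int_rpow_sub_left hq1).sub (int_rpow_sub_left hq1)).const_mul _
  have step1 : ∫ x in A..B, ∫ y in c..d, f x y / |y - x| ^ (1 + 2*r) ≤ ∫ x in A..B, Ψ x := by
    apply aux_int_le hAB hΨint
    · intro x _
      apply intervalIntegral.integral_nonneg hcd
      intro y _
      exact div_nonneg (hf0 x y) (Real.rpow_nonneg (abs_nonneg _) _)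
    · rw [← Measure.restrict_congr_set Ioo_ae_eq_Ioc]
      apply ae_restrict_of_forall_mem measurableSet_Ioo
      intro x hx
      have hxB : x < B := hx.2
      have inner1 : ∫ y in c..d, f x y / |y - x| ^ (1 + 2*r) ≤
          ∫ y in c..d, C * (y - x) ^ (-(1 + 2*r)) := by
        apply aux_int_le hcd
        · apply IntervalIntegrable.const_mul
          apply ContinuousOn.intervalIntegrable
          apply ContinuousOn.rpow_const (continuous_id.sub continuous_const).continuousOn
          intro y hy
          rw [Set.uIcc_of_le hcd] at hy
          have : c ≤ y := hy.1
          exact Or.inl (ne_of_gt (by linarith : (0:ℝ) < y - x))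
        · intro y _
          exact div_nonneg (hf0 x y) (Real.rpow_nonneg (abs_nonneg _) _)
        · apply ae_restrict_of_forall_mem measurableSet_Ioc
          intro y hy
          have hyx : 0 < y - x := by have := hy.1; linarith
          have habs : |y - x| = y - x := abs_of_pos hyx
          rw [habs, Real.rpow_neg (le_of_lt hyx), div_eq_mul_inv]
          exact mul_le_mul_of_nonneg_right (hfC x hx y hy)
            (inv_nonneg.2 (Real.rpow_nonneg (le_of_lt hyx) _))
      have inner2 : ∫ y in c..d, C * (y - x) ^ (-(1 + 2*r)) = Ψ x := by
        rw [intervalIntegral.integral_const_mul,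
          my_inner_left (by simp; linarith) hcd (by linarith)]
        rw [show -(1 + 2*r) + 1 = -(2*r) by ring, hΨ]
        field_simp
        ring
      calc ∫ y in c..d, f x y / |y - x| ^ (1 + 2*r) ≤
            ∫ y in c..d, C * (y - x) ^ (-(1 + 2*r)) := inner1
        _ = Ψ x := inner2
  have step2 : ∫ x in A..B, Ψ x = C / (2*r*(1-2*r)) *
      (((c - A) ^ (1-2*r) - (c - B) ^ (1-2*r)) -
        ((d - A) ^ (1-2*r) - (d - B) ^ (1-2*r))) := by
    rw [hΨ]
    rw [intervalIntegral.integral_const_mul]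
    rw [intervalIntegral.integral_sub (int_rpow_sub_left hq1) (int_rpow_sub_left hq1)]
    rw [my_outer_left hq1 hq2 hBc hAB, my_outer_left hq1 hq2 (by linarith) hAB]
    rw [show -(2*r) + 1 = 1 - 2*r by ring]
    have hp : (1 - 2*r) ≠ 0 := by intro hc; rw [sub_eq_zero] at hc; linarith
    field_simp
  rw [step2] at step1
  exact step1

/-- Cauchy–Schwarz: `(∫ₐᵇ |g|)² ≤ (b-a) ∫ₐᵇ g²`. -/
lemma my_cs {a b : ℝ} (hab : a ≤ b) {g : ℝ → ℝ}
    (hg : IntegrableOn g (Set.Ioc a b)) (hg2 : IntegrableOn (fun s => g s ^ 2) (Set.Ioc a b)) :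
    (∫ s in a..b, |g s|) ^ 2 ≤ (b - a) * ∫ s in a..b, g s ^ 2 := by
  set μ := volume.restrict (Set.Ioc a b) with hμ
  haveI : IsFiniteMeasure μ := by
    constructor
    rw [hμ, Measure.restrict_apply_univ]
    exact measure_Ioc_lt_top
  have hpq : Real.HolderConjugate 2 2 := Real.holderConjugate_iff.mpr ⟨by norm_num, by norm_num⟩
  have habs : IntegrableOn (fun s => |g s| ^ 2) (Set.Ioc a b) := by
    simpa [sq_abs] using hg2
  have hmem : MemLp (fun s => |g s|) (ENNReal.ofReal 2) μ := by
    rw [show ENNReal.ofReal 2 = 2 by norm_num]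
    exact (memLp_two_iff_integrable_sq hg.abs.aestronglyMeasurable).2 habs
  have hone : MemLp (fun _ : ℝ => (1:ℝ)) (ENNReal.ofReal 2) μ := memLp_const 1
  have H := integral_mul_le_Lp_mul_Lq_of_nonneg (μ := μ) hpq
    (Filter.Eventually.of_forall fun s => abs_nonneg (g s))
    (Filter.Eventually.of_forall fun _ => zero_le_one) hmem hone
  simp only [mul_one] at H
  have h1 : ∫ s, |g s| ^ (2:ℝ) ∂μ = ∫ s, g s ^ 2 ∂μ := by
    apply MeasureTheory.integral_congr_ae
    apply Filter.Eventually.of_forall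
    intro s
    beta_reduce
    rw [show ((2:ℝ)) = ((2:ℕ):ℝ) by norm_num, Real.rpow_natCast, sq_abs]
  have h2 : ∫ _s, (1:ℝ) ^ (2:ℝ) ∂μ = b - a := by
    simp only [Real.one_rpow]
    rw [MeasureTheory.integral_const, smul_eq_mul, mul_one, hμ, measureReal_def, Measure.restrict_apply_univ,
      Real.volume_Ioc, ENNReal.toReal_ofReal (by linarith)]
  rw [h1, h2] at H
  have hX : (0:ℝ) ≤ ∫ s, g s ^ 2 ∂μ := integral_nonneg fun s => sq_nonneg _
  have hI0 : (0:ℝ) ≤ ∫ s, |g s| ∂μ := integral_nonneg fun s => abs_nonneg _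
  have hsq : (∫ s, |g s| ∂μ) ^ 2 ≤
      ((∫ s, g s ^ 2 ∂μ) ^ ((1:ℝ)/2) * (b - a) ^ ((1:ℝ)/2)) ^ 2 :=
    pow_le_pow_left₀ hI0 H 2
  have hexp : ((∫ s, g s ^ 2 ∂μ) ^ ((1:ℝ)/2) * (b - a) ^ ((1:ℝ)/2)) ^ 2 =
      (b - a) * ∫ s, g s ^ 2 ∂μ := by
    rw [mul_pow, ← Real.rpow_natCast ((∫ s, g s ^ 2 ∂μ) ^ ((1:ℝ)/2)) 2,
      ← Real.rpow_natCast ((b - a) ^ ((1:ℝ)/2)) 2,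
      ← Real.rpow_mul hX, ← Real.rpow_mul (by linarith : (0:ℝ) ≤ b - a)]
    norm_num
    ring
  rw [hexp] at hsq
  rw [intervalIntegral.integral_of_le hab, intervalIntegral.integral_of_le hab]
  exact hsq


/-- Extradiagonal terms bound in Lemma 1: with `w = v - v_h`, where
`v_h = ∑ᵢ v(xᵢ) 1_{γᵢ}` is the piecewise constant interpolant of `v`
on a partition of `(0,1)` into subintervals of length at most `h`,
`∑ᵢ ∑_{j≠i} ∬_{γᵢ×γⱼ} |w y - w x|² / |y - x|^(1+2r)
  ≤ (4/(r(1-2r))) h^(2-2r) ∫₀¹ g²`. -/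
theorem extradiagonal_terms_bound (r h : ℝ) (hr0 : 0 < r) (hr : r < 1 / 2) (hh : 0 < h)
    (N : ℕ) (t : ℕ → ℝ) (ht0 : t 0 = 0) (htN : t N = 1)
    (hmono : ∀ i < N, t i < t (i + 1))
    (hlen : ∀ i < N, t (i + 1) - t i ≤ h)
    (v g : ℝ → ℝ)
    (hg_int : IntegrableOn g (Icc (0:ℝ) 1))
    (hg_sq : IntegrableOn (fun s => g s ^ 2) (Icc (0:ℝ) 1))
    (hv : ∀ p ∈ Icc (0:ℝ) 1, ∀ q ∈ Icc (0:ℝ) 1, v q - v p = ∫ s in p..q, g s)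
    (xp : ℕ → ℝ) (hxp : ∀ i < N, xp i ∈ Ioc (t i) (t (i + 1)))
    (w : ℝ → ℝ)
    (hw : ∀ y, w y = v y -
      ∑ i ∈ Finset.range N, Set.indicator (Ioc (t i) (t (i + 1))) (fun _ => v (xp i)) y) :
    ∑ i ∈ Finset.range N, ∑ j ∈ (Finset.range N).erase i,
        ∫ x in t i..t (i + 1), ∫ y in t j..t (j + 1),
          |w y - w x| ^ 2 / |y - x| ^ (1 + 2 * r) ≤
      (4 / (r * (1 - 2 * r))) * h ^ (2 - 2 * r) * ∫ s in (0:ℝ)..1, g s ^ 2 := by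
  have hrne : r ≠ 0 := ne_of_gt hr0
  have hp0 : (0:ℝ) < 1 - 2 * r := by linarith
  have hpne : (1:ℝ) - 2 * r ≠ 0 := ne_of_gt hp0
  -- monotonicity of the partition
  have tmono : ∀ l, l ≤ N → ∀ k, k ≤ l → t k ≤ t l := by
    intro l
    induction l with
    | zero => intro _ k hk; rw [Nat.le_zero.1 hk]
    | succ n ih =>
      intro hl k hk
      rcases Nat.eq_or_lt_of_le hk with heq | hlt
      · rw [heq]
      · exact le_trans (ih (by omega) k (by omega)) (le_of_lt (hmono n (by omega)))
  have ht0le : ∀ k, k ≤ N → 0 ≤ t k := by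
    intro k hk
    have := tmono k hk 0 (Nat.zero_le k)
    rw [ht0] at this
    exact this
  have ht1ge : ∀ k, k ≤ N → t k ≤ 1 := by
    intro k hk
    have := tmono N le_rfl k hk
    rw [htN] at this
    exact this
  set G : ℕ → ℝ := fun i => ∫ s in t i..t (i+1), g s ^ 2 with hGdef
  have hab : ∀ i, i < N → t i ≤ t (i+1) := fun i hi => le_of_lt (hmono i hi)
  have hGnn : ∀ i, i < N → 0 ≤ G i := fun i hi =>
    intervalIntegral.integral_nonneg (hab i hi) (fun s _ => sq_nonneg _)
  have hsub : ∀ i, i < N → Set.Ioc (t i) (t (i+1)) ⊆ Set.Icc (0:ℝ) 1 := by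
    intro i hi
    exact Set.Ioc_subset_Icc_self.trans
      (Set.Icc_subset_Icc (ht0le i (by omega)) (ht1ge (i+1) (by omega)))
  -- the square bound on w
  have hWsq : ∀ i, i < N → ∀ x ∈ Set.Ioc (t i) (t (i+1)), w x ^ 2 ≤ h * G i := by
    intro i hi x hx
    have hx01 : x ∈ Set.Icc (0:ℝ) 1 := hsub i hi hx
    have hu := hxp i hi
    have hu01 : xp i ∈ Set.Icc (0:ℝ) 1 := hsub i hi hu
    have hind : ∑ k ∈ Finset.range N,
        Set.indicator (Set.Ioc (t k) (t (k+1))) (fun _ => v (xp k)) x = v (xp i) := by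
      rw [Finset.sum_eq_single_of_mem i (Finset.mem_range.2 hi)]
      · exact Set.indicator_of_mem hx _
      · intro k hk hki
        have hkN := Finset.mem_range.1 hk
        apply Set.indicator_of_notMem
        intro hxk
        rcases lt_or_gt_of_ne hki with hlt | hgt
        · have h1 : t (k+1) ≤ t i := tmono i (by omega) (k+1) (by omega)
          have h2 := hx.1
          have h3 := hxk.2
          linarith
        · have h1 : t (i+1) ≤ t k :=
            tmono k (by omega) (i+1) (by omega)
          have h2 := hx.2
          have h3 := hxk.1
          linarith
    have hwx : w x = ∫ s in (xp i)..x, g s := by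
      rw [hw x, hind]
      exact hv (xp i) hu01 x hx01
    have hgi : IntegrableOn g (Set.Ioc (t i) (t (i+1))) := hg_int.mono_set (hsub i hi)
    have hgi2 : IntegrableOn (fun s => g s ^ 2) (Set.Ioc (t i) (t (i+1))) :=
      hg_sq.mono_set (hsub i hi)
    have hgiI : IntervalIntegrable g volume (t i) (t (i+1)) :=
      (intervalIntegrable_iff_integrableOn_Ioc_of_le (hab i hi)).2 hgi
    have habsI : IntervalIntegrable (fun s => |g s|) volume (t i) (t (i+1)) := hgiI.abs
    have habs0 : 0 ≤ᵐ[volume.restrict (Set.Ioc (t i) (t (i+1)))] fun s => |g s| :=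
      Filter.Eventually.of_forall fun s => abs_nonneg _
    have habs : |w x| ≤ ∫ s in t i..t (i+1), |g s| := by
      rw [hwx]
      rcases le_total (xp i) x with hc | hc
      · calc |∫ s in (xp i)..x, g s| ≤ ∫ s in (xp i)..x, |g s| :=
            intervalIntegral.abs_integral_le_integral_abs hc
          _ ≤ ∫ s in t i..t (i+1), |g s| :=
            intervalIntegral.integral_mono_interval (le_of_lt hu.1) hc hx.2 habs0 habsI
      · rw [intervalIntegral.integral_symm, abs_neg]
        calc |∫ s in x..(xp i), g s| ≤ ∫ s in x..(xp i), |g s| :=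
            intervalIntegral.abs_integral_le_integral_abs hc
          _ ≤ ∫ s in t i..t (i+1), |g s| :=
            intervalIntegral.integral_mono_interval (le_of_lt hx.1) hc hu.2 habs0 habsI
    have hcs := my_cs (hab i hi) hgi hgi2
    have h1 : w x ^ 2 ≤ (∫ s in t i..t (i+1), |g s|) ^ 2 := by
      rw [← sq_abs]
      exact pow_le_pow_left₀ (abs_nonneg _) habs 2
    have h2 : (t (i+1) - t i) * (∫ s in t i..t (i+1), g s ^ 2) ≤ h * G i := by
      rw [hGdef]
      exact mul_le_mul_of_nonneg_right (hlen i hi) (hGnn i hi)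
    calc w x ^ 2 ≤ (∫ s in t i..t (i+1), |g s|) ^ 2 := h1
      _ ≤ (t (i+1) - t i) * ∫ s in t i..t (i+1), g s ^ 2 := hcs
      _ ≤ h * G i := h2
  -- definition of the closed-form bound D
  set D : ℕ → ℕ → ℝ := fun i j =>
    if j < i then
      ((t (i+1) - t (j+1)) ^ (1-2*r) - (t i - t (j+1)) ^ (1-2*r)) -
        ((t (i+1) - t j) ^ (1-2*r) - (t i - t j) ^ (1-2*r))
    else
      ((t j - t i) ^ (1-2*r) - (t j - t (i+1)) ^ (1-2*r)) -
        ((t (j+1) - t i) ^ (1-2*r) - (t (j+1) - t (i+1)) ^ (1-2*r)) with hDdef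
  -- the per-pair bound
  have hTij : ∀ i ∈ Finset.range N, ∀ j ∈ (Finset.range N).erase i,
      (∫ x in t i..t (i+1), ∫ y in t j..t (j+1),
          |w y - w x| ^ 2 / |y - x| ^ (1 + 2 * r)) ≤
        (h / (r * (1 - 2*r))) * ((G i + G j) * D i j) := by
    intro i hi j hj
    have hiN : i < N := Finset.mem_range.1 hi
    have hjN : j < N := Finset.mem_range.1 (Finset.mem_of_mem_erase hj)
    have hji : j ≠ i := Finset.ne_of_mem_erase hj
    have hC0 : (0:ℝ) ≤ 2*h*G i + 2*h*G j := by
      have := hGnn i hiN; have := hGnn j hjN; positivity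
    have hf0 : ∀ x y : ℝ, (0:ℝ) ≤ |w y - w x| ^ 2 := fun x y => pow_nonneg (abs_nonneg _) 2
    have hfC : ∀ x ∈ Set.Ioo (t i) (t (i+1)), ∀ y ∈ Set.Ioc (t j) (t (j+1)),
        |w y - w x| ^ 2 ≤ 2*h*G i + 2*h*G j := by
      intro x hx y hy
      have h1 := hWsq i hiN x ⟨hx.1, le_of_lt hx.2⟩
      have h2 := hWsq j hjN y hy
      have : |w y - w x| ^ 2 = (w y - w x) ^ 2 := sq_abs _
      nlinarith [sq_nonneg (w x + w y)]
    rcases lt_or_gt_of_ne hji with hlt | hgt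
    · -- j < i : inner interval to the left
      have hdA : t (j+1) ≤ t i := tmono i (by omega) (j+1) (by omega)
      have hb := pair_right (C := 2*h*G i + 2*h*G j) hr0 hr hC0
        (hab j hjN) hdA (hab i hiN) hf0 hfC
      calc (∫ x in t i..t (i+1), ∫ y in t j..t (j+1),
            |w y - w x| ^ 2 / |y - x| ^ (1 + 2 * r)) ≤
          (2*h*G i + 2*h*G j) / (2*r*(1-2*r)) *
            (((t (i+1) - t (j+1)) ^ (1-2*r) - (t i - t (j+1)) ^ (1-2*r)) -
              ((t (i+1) - t j) ^ (1-2*r) - (t i - t j) ^ (1-2*r))) := hb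
        _ = (h / (r * (1 - 2*r))) * ((G i + G j) * D i j) := by
            simp only [hDdef, if_pos hlt]
            field_simp
    · -- i < j : inner interval to the right
      have hBc : t (i+1) ≤ t j := tmono j (by omega) (i+1) (by omega)
      have hb := pair_left (C := 2*h*G i + 2*h*G j) hr0 hr hC0
        (hab j hjN) hBc (hab i hiN) hf0 hfC
      calc (∫ x in t i..t (i+1), ∫ y in t j..t (j+1),
            |w y - w x| ^ 2 / |y - x| ^ (1 + 2 * r)) ≤
          (2*h*G i + 2*h*G j) / (2*r*(1-2*r)) *
            (((t j - t i) ^ (1-2*r) - (t j - t (i+1)) ^ (1-2*r)) -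
              ((t (j+1) - t i) ^ (1-2*r) - (t (j+1) - t (i+1)) ^ (1-2*r))) := hb
        _ = (h / (r * (1 - 2*r))) * ((G i + G j) * D i j) := by
            simp only [hDdef, if_neg (by omega : ¬ j < i)]
            field_simp

  -- splitting of the erased range
  have hsplit : ∀ i, i < N → (Finset.range N).erase i =
      Finset.range i ∪ Finset.Ico (i+1) N := by
    intro i hi
    ext k
    simp only [Finset.mem_erase, Finset.mem_range, Finset.mem_union, Finset.mem_Ico]
    omega
  have hdisj : ∀ i : ℕ, Disjoint (Finset.range i) (Finset.Ico (i+1) N) := by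
    intro i
    simp only [Finset.disjoint_left, Finset.mem_range, Finset.mem_Ico]
    omega
  have hrp : (0:ℝ) ≤ 1 - 2*r := le_of_lt hp0
  -- telescoping: row sums of D
  have claim1 : ∀ i, i < N → ∑ j ∈ (Finset.range N).erase i, D i j ≤ 2 * h ^ (1-2*r) := by
    intro i hi
    rw [hsplit i hi, Finset.sum_union (hdisj i)]
    have hL : ∑ j ∈ Finset.range i, D i j =
        (fun k => (t (i+1) - t k) ^ (1-2*r) - (t i - t k) ^ (1-2*r)) i -
        (fun k => (t (i+1) - t k) ^ (1-2*r) - (t i - t k) ^ (1-2*r)) 0 := by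
      rw [← Finset.sum_range_sub (fun k => (t (i+1) - t k) ^ (1-2*r) - (t i - t k) ^ (1-2*r)) i]
      apply Finset.sum_congr rfl
      intro j hj
      simp only [hDdef, if_pos (Finset.mem_range.1 hj)]
    have hR : ∑ j ∈ Finset.Ico (i+1) N, D i j =
        ((fun k => (t k - t i) ^ (1-2*r) - (t k - t (i+1)) ^ (1-2*r)) (i+1)) -
        ((fun k => (t k - t i) ^ (1-2*r) - (t k - t (i+1)) ^ (1-2*r)) N) := by
      set u : ℕ → ℝ := fun k => (t k - t i) ^ (1-2*r) - (t k - t (i+1)) ^ (1-2*r) with hu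
      have : ∑ j ∈ Finset.Ico (i+1) N, D i j = ∑ j ∈ Finset.Ico (i+1) N, (u j - u (j+1)) := by
        apply Finset.sum_congr rfl
        intro j hj
        have hij : i + 1 ≤ j := (Finset.mem_Ico.1 hj).1
        simp only [hDdef, if_neg (by omega : ¬ j < i), hu]
      rw [this, Finset.sum_Ico_eq_sub _ (by omega : i+1 ≤ N),
        Finset.sum_range_sub' u N, Finset.sum_range_sub' u (i+1)]
      ring
    simp only [hL, hR, ht0, htN, sub_zero, sub_self, Real.zero_rpow hpne]
    have m1 : (t (i+1) - t i) ^ (1-2*r) ≤ h ^ (1-2*r) :=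
      Real.rpow_le_rpow (by linarith [hmono i hi]) (hlen i hi) hrp
    have m2 : (t i) ^ (1-2*r) ≤ (t (i+1)) ^ (1-2*r) :=
      Real.rpow_le_rpow (ht0le i (by omega)) (hab i hi) hrp
    have m3 : (1 - t (i+1)) ^ (1-2*r) ≤ (1 - t i) ^ (1-2*r) :=
      Real.rpow_le_rpow (by linarith [ht1ge (i+1) (by omega)])
        (by linarith [hab i hi]) hrp
    linarith
  -- telescoping: column sums of D
  have claim2 : ∀ j, j < N → ∑ i ∈ (Finset.range N).erase j, D i j ≤ 2 * h ^ (1-2*r) := by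
    intro j hj
    rw [hsplit j hj, Finset.sum_union (hdisj j)]
    have hL : ∑ i ∈ Finset.range j, D i j =
        ((fun k => (t j - t k) ^ (1-2*r) - (t (j+1) - t k) ^ (1-2*r)) 0) -
        ((fun k => (t j - t k) ^ (1-2*r) - (t (j+1) - t k) ^ (1-2*r)) j) := by
      set m : ℕ → ℝ := fun k => (t j - t k) ^ (1-2*r) - (t (j+1) - t k) ^ (1-2*r) with hm
      have : ∑ i ∈ Finset.range j, D i j = ∑ i ∈ Finset.range j, (m i - m (i+1)) := by
        apply Finset.sum_congr rfl
        intro i hi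
        have hij : i < j := Finset.mem_range.1 hi
        simp only [hDdef, if_neg (by omega : ¬ j < i), hm]
        ring
      rw [this, Finset.sum_range_sub' m j]
    have hR : ∑ i ∈ Finset.Ico (j+1) N, D i j =
        ((fun k => (t k - t (j+1)) ^ (1-2*r) - (t k - t j) ^ (1-2*r)) N) -
        ((fun k => (t k - t (j+1)) ^ (1-2*r) - (t k - t j) ^ (1-2*r)) (j+1)) := by
      set u : ℕ → ℝ := fun k => (t k - t (j+1)) ^ (1-2*r) - (t k - t j) ^ (1-2*r) with hu
      have : ∑ i ∈ Finset.Ico (j+1) N, D i j = ∑ i ∈ Finset.Ico (j+1) N, (u (i+1) - u i) := by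
        apply Finset.sum_congr rfl
        intro i hi
        have hij : j + 1 ≤ i := (Finset.mem_Ico.1 hi).1
        simp only [hDdef, if_pos (by omega : j < i), hu]
        ring
      rw [this, Finset.sum_Ico_eq_sub _ (by omega : j+1 ≤ N),
        Finset.sum_range_sub u N, Finset.sum_range_sub u (j+1)]
      ring
    simp only [hL, hR, ht0, htN, sub_zero, sub_self, Real.zero_rpow hpne]
    have m1 : (t (j+1) - t j) ^ (1-2*r) ≤ h ^ (1-2*r) :=
      Real.rpow_le_rpow (by linarith [hmono j hj]) (hlen j hj) hrp
    have m2 : (t j) ^ (1-2*r) ≤ (t (j+1)) ^ (1-2*r) :=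
      Real.rpow_le_rpow (ht0le j (by omega)) (hab j hj) hrp
    have m3 : (1 - t (j+1)) ^ (1-2*r) ≤ (1 - t j) ^ (1-2*r) :=
      Real.rpow_le_rpow (by linarith [ht1ge (j+1) (by omega)])
        (by linarith [hab j hj]) hrp
    linarith
  -- the sum of the local energies is the total energy
  have hsum : ∑ i ∈ Finset.range N, G i = ∫ s in (0:ℝ)..1, g s ^ 2 := by
    have hint : ∀ k < N, IntervalIntegrable (fun s => g s ^ 2) volume (t k) (t (k+1)) :=
      fun k hk => (intervalIntegrable_iff_integrableOn_Ioc_of_le (hab k hk)).2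
        (hg_sq.mono_set (hsub k hk))
    have h2 := intervalIntegral.sum_integral_adjacent_intervals hint
    rw [ht0, htN] at h2
    exact h2
  -- key estimates for the two double sums
  have key1 : ∑ i ∈ Finset.range N, ∑ j ∈ (Finset.range N).erase i, G i * D i j ≤
      2 * h ^ (1-2*r) * ∑ i ∈ Finset.range N, G i := by
    calc ∑ i ∈ Finset.range N, ∑ j ∈ (Finset.range N).erase i, G i * D i j
        = ∑ i ∈ Finset.range N, G i * ∑ j ∈ (Finset.range N).erase i, D i j := by
          apply Finset.sum_congr rfl
          intro i _
          rw [Finset.mul_sum]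
      _ ≤ ∑ i ∈ Finset.range N, G i * (2 * h ^ (1-2*r)) := by
          apply Finset.sum_le_sum
          intro i hi
          exact mul_le_mul_of_nonneg_left (claim1 i (Finset.mem_range.1 hi))
            (hGnn i (Finset.mem_range.1 hi))
      _ = 2 * h ^ (1-2*r) * ∑ i ∈ Finset.range N, G i := by
          rw [← Finset.sum_mul]
          ring
  have key2 : ∑ i ∈ Finset.range N, ∑ j ∈ (Finset.range N).erase i, G j * D i j ≤
      2 * h ^ (1-2*r) * ∑ i ∈ Finset.range N, G i := by
    have hswap : ∀ x y : ℕ, x ∈ Finset.range N ∧ y ∈ (Finset.range N).erase x ↔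
        x ∈ (Finset.range N).erase y ∧ y ∈ Finset.range N := by
      intro x y
      simp only [Finset.mem_erase, Finset.mem_range]
      constructor
      · rintro ⟨hx, hyx, hy⟩; exact ⟨⟨fun hc => hyx hc.symm, hx⟩, hy⟩
      · rintro ⟨⟨hxy, hx⟩, hy⟩; exact ⟨hx, fun hc => hxy hc.symm, hy⟩
    rw [Finset.sum_comm' hswap]
    calc ∑ j ∈ Finset.range N, ∑ i ∈ (Finset.range N).erase j, G j * D i j
        = ∑ j ∈ Finset.range N, G j * ∑ i ∈ (Finset.range N).erase j, D i j := by
          apply Finset.sum_congr rfl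
          intro j _
          rw [Finset.mul_sum]
      _ ≤ ∑ j ∈ Finset.range N, G j * (2 * h ^ (1-2*r)) := by
          apply Finset.sum_le_sum
          intro j hj
          exact mul_le_mul_of_nonneg_left (claim2 j (Finset.mem_range.1 hj))
            (hGnn j (Finset.mem_range.1 hj))
      _ = 2 * h ^ (1-2*r) * ∑ i ∈ Finset.range N, G i := by
          rw [← Finset.sum_mul]
          ring
  -- assemble
  calc ∑ i ∈ Finset.range N, ∑ j ∈ (Finset.range N).erase i,
        ∫ x in t i..t (i + 1), ∫ y in t j..t (j + 1),
          |w y - w x| ^ 2 / |y - x| ^ (1 + 2 * r)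
      ≤ ∑ i ∈ Finset.range N, ∑ j ∈ (Finset.range N).erase i,
          (h / (r * (1 - 2*r))) * ((G i + G j) * D i j) :=
        Finset.sum_le_sum fun i hi => Finset.sum_le_sum (hTij i hi)
    _ = (h / (r * (1 - 2*r))) *
        ((∑ i ∈ Finset.range N, ∑ j ∈ (Finset.range N).erase i, G i * D i j) +
          ∑ i ∈ Finset.range N, ∑ j ∈ (Finset.range N).erase i, G j * D i j) := by
        rw [mul_add, Finset.mul_sum, Finset.mul_sum, ← Finset.sum_add_distrib]
        apply Finset.sum_congr rfl
        intro i _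
        rw [Finset.mul_sum, Finset.mul_sum, ← Finset.sum_add_distrib]
        apply Finset.sum_congr rfl
        intro j _
        ring
    _ ≤ (h / (r * (1 - 2*r))) *
        (2 * h ^ (1-2*r) * (∑ i ∈ Finset.range N, G i) +
          2 * h ^ (1-2*r) * ∑ i ∈ Finset.range N, G i) := by
        apply mul_le_mul_of_nonneg_left (add_le_add key1 key2)
        positivity
    _ = (4 / (r * (1 - 2 * r))) * h ^ (2 - 2 * r) * ∑ i ∈ Finset.range N, G i := by
        rw [show (2:ℝ) - 2 * r = 1 + (1 - 2*r) by ring, Real.rpow_add hh, Real.rpow_one]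
        ring
    _ = (4 / (r * (1 - 2 * r))) * h ^ (2 - 2 * r) * ∫ s in (0:ℝ)..1, g s ^ 2 := by
        rw [hsum]
end

section
/- Let V be a real Hilbert space, let a : V × V → ℝ be a bilinear form with |a(u,v)| ≤ M‖u‖‖v‖ for all u, v ∈ V and a(v,v) ≥ α‖v‖² for all v ∈ V, where M ≥ 0 and α > 0. Let f, ξ be continuous linear functionals on V and let u ∈ V satisfy a(u,v) + ξ(v) = f(v) for all v ∈ V. Let K_h be a subspace of V and let u_h ∈ K_h satisfy a(u_h, v_h) = f(v_h) for all v_h ∈ K_h. Then for every w_h ∈ K_h and every continuous linear functional η on V that vanishes on K_h, one has α‖u_h − w_h‖ ≤ M‖u − w_h‖ + ‖ξ − η‖_{V'}, where ‖·‖_{V'} denotes the operator (dual) norm. -/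
/-- Key intermediate inequality in the proof of Proposition 3: if
`a` is a bounded (`M`) coercive (`α`) bilinear form on a real Hilbert space `V`,
`u` satisfies `a(u,v) + ξ(v) = f(v)` for all `v ∈ V`, `u_h ∈ K_h` satisfies
`a(u_h, v_h) = f(v_h)` for all `v_h ∈ K_h`, and `η` is a continuous linear
functional vanishing on the subspace `K_h`, then for every `w_h ∈ K_h`,
`α ‖u_h - w_h‖ ≤ M ‖u - w_h‖ + ‖ξ - η‖_{V'}`. -/
theorem saddle_point_intermediate
    {V : Type*} [NormedAddCommGroup V] [InnerProductSpace ℝ V] [CompleteSpace V]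
    (a : V →ₗ[ℝ] V →ₗ[ℝ] ℝ) (M α : ℝ) (hM : 0 ≤ M) (hα : 0 < α)
    (hbound : ∀ u v : V, |a u v| ≤ M * ‖u‖ * ‖v‖)
    (hcoer : ∀ v : V, α * ‖v‖ ^ 2 ≤ a v v)
    (f ξ : V →L[ℝ] ℝ) (u : V)
    (hu : ∀ v : V, a u v + ξ v = f v)
    (K_h : Submodule ℝ V) (u_h : V) (hu_h : u_h ∈ K_h)
    (huh : ∀ v_h ∈ K_h, a u_h v_h = f v_h)
    (η : V →L[ℝ] ℝ) (hη : ∀ v ∈ K_h, η v = 0)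
    (w_h : V) (hw_h : w_h ∈ K_h) :
    α * ‖u_h - w_h‖ ≤ M * ‖u - w_h‖ + ‖ξ - η‖ := by
  set e := u_h - w_h with he
  have heK : e ∈ K_h := K_h.sub_mem hu_h hw_h
  by_cases h0 : e = 0
  · simp [he] at h0 ⊢
    rw [sub_eq_zero] at h0
    rw [h0]
    simp
    positivity
  · have hne : 0 < ‖e‖ := norm_pos_iff.mpr h0
    have key : a e e = a (u - w_h) e + (ξ - η) e := by
      have h1 : a u_h e = f e := huh e heK
      have h2 : a u e + ξ e = f e := hu e
      have h3 : η e = 0 := hη e heK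
      have : a e e = a u_h e - a w_h e := by
        simp [he, map_sub, LinearMap.sub_apply]; ring
      rw [this, h1, ← h2]
      simp [map_sub, LinearMap.sub_apply, h3]
      ring
    have hb : a (u - w_h) e ≤ M * ‖u - w_h‖ * ‖e‖ :=
      le_trans (le_abs_self _) (hbound _ _)
    have hd : (ξ - η) e ≤ ‖ξ - η‖ * ‖e‖ :=
      le_trans (le_abs_self _) ((ξ - η).le_opNorm e)
    have hcoe : α * ‖e‖ ^ 2 ≤ M * ‖u - w_h‖ * ‖e‖ + ‖ξ - η‖ * ‖e‖ := by
      calc α * ‖e‖ ^ 2 ≤ a e e := hcoer e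
        _ = a (u - w_h) e + (ξ - η) e := key
        _ ≤ _ := add_le_add hb hd
    have := (mul_le_mul_iff_of_pos_right hne).mp (by nlinarith : (α * ‖e‖) * ‖e‖ ≤ (M * ‖u - w_h‖ + ‖ξ - η‖) * ‖e‖)
    linarith
end

section
/- (Proposition 3) Let V be a real Hilbert space, let a : V × V → ℝ be a bilinear form with |a(u,v)| ≤ M‖u‖‖v‖ for all u, v ∈ V and a(v,v) ≥ α‖v‖² for all v ∈ V, where M ≥ 0 and α > 0. Let f, ξ be continuous linear functionals on V and let u ∈ V satisfy a(u,v) + ξ(v) = f(v) for all v ∈ V. Let K_h be a subspace of V, let W be a set of continuous linear functionals on V each of which vanishes on K_h, and let u_h ∈ K_h satisfy a(u_h, v_h) = f(v_h) for all v_h ∈ K_h. Then ‖u − u_h‖ ≤ (1 + M/α) · inf_{w_h ∈ K_h} ‖w_h − u‖ + (1/α) · inf_{η ∈ W} ‖ξ − η‖_{V'}, where ‖·‖_{V'} is the dual norm. -/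
/-- Proposition 3 (abstract saddle-point error estimate with nonconforming
multiplier space): if `a` is a bounded (`M`) coercive (`α`) bilinear form on a
real Hilbert space `V`, `u` satisfies `a(u,v) + ξ(v) = f(v)` for all `v ∈ V`,
`u_h ∈ K_h` satisfies `a(u_h, v_h) = f(v_h)` for all `v_h ∈ K_h`, and `W` is a
nonempty set of continuous linear functionals vanishing on the subspace `K_h`,
then `‖u - u_h‖ ≤ (1 + M/α) inf_{w_h ∈ K_h} ‖w_h - u‖
                 + (1/α) inf_{η ∈ W} ‖ξ - η‖_{V'}`. -/
theorem saddle_point_error_estimate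
    {V : Type*} [NormedAddCommGroup V] [InnerProductSpace ℝ V] [CompleteSpace V]
    (a : V →ₗ[ℝ] V →ₗ[ℝ] ℝ) (M α : ℝ) (hM : 0 ≤ M) (hα : 0 < α)
    (hbound : ∀ u v : V, |a u v| ≤ M * ‖u‖ * ‖v‖)
    (hcoer : ∀ v : V, α * ‖v‖ ^ 2 ≤ a v v)
    (f ξ : V →L[ℝ] ℝ) (u : V)
    (hu : ∀ v : V, a u v + ξ v = f v)
    (K_h : Submodule ℝ V) (u_h : V) (hu_h : u_h ∈ K_h)
    (huh : ∀ v_h ∈ K_h, a u_h v_h = f v_h)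
    (W : Set (V →L[ℝ] ℝ)) (hWne : W.Nonempty)
    (hW : ∀ η ∈ W, ∀ v ∈ K_h, η v = 0) :
    ‖u - u_h‖ ≤ (1 + M / α) * (⨅ w_h : K_h, ‖(w_h : V) - u‖) +
      (1 / α) * (⨅ η : W, ‖ξ - (η : V →L[ℝ] ℝ)‖) := by
  have hKne : Nonempty K_h := ⟨⟨0, K_h.zero_mem⟩⟩
  have hWne' : Nonempty W := hWne.to_subtype
  -- key pointwise estimate
  have key : ∀ w ∈ K_h, ∀ η ∈ W,
      ‖u - u_h‖ ≤ (1 + M / α) * ‖w - u‖ + (1 / α) * ‖ξ - η‖ := by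
    intro w hw η hη
    set e := u_h - w with he
    have heK : e ∈ K_h := K_h.sub_mem hu_h hw
    have h1 : a (u_h - u) e = ξ e := by
      have h2 : a u_h e = f e := huh e heK
      have h3 : a u e + ξ e = f e := hu e
      have : a (u_h - u) e = a u_h e - a u e := by
        simp [map_sub, LinearMap.sub_apply]
      linarith [this]
    have hηe : η e = 0 := hW η hη e heK
    have hxi : ξ e ≤ ‖ξ - η‖ * ‖e‖ := by
      have : ξ e = (ξ - η) e := by simp [hηe]
      rw [this]
      exact le_trans (le_abs_self _) ((ξ - η).le_opNorm e)
    have hb : a (u - w) e ≤ M * ‖u - w‖ * ‖e‖ :=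
      le_trans (le_abs_self _) (hbound (u - w) e)
    have hco : α * ‖e‖ ^ 2 ≤ a e e := hcoer e
    have hsplit : a e e = a (u_h - u) e + a (u - w) e := by
      have : (u_h - u) + (u - w) = e := by rw [he]; abel
      rw [← this]; simp [map_add, LinearMap.add_apply]
    have hmain : α * ‖e‖ ^ 2 ≤ ‖ξ - η‖ * ‖e‖ + M * ‖u - w‖ * ‖e‖ := by
      calc α * ‖e‖ ^ 2 ≤ a e e := hco
        _ = a (u_h - u) e + a (u - w) e := hsplit
        _ ≤ ‖ξ - η‖ * ‖e‖ + M * ‖u - w‖ * ‖e‖ := by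
            rw [h1]; exact add_le_add hxi hb
    have hne : α * ‖e‖ ≤ ‖ξ - η‖ + M * ‖u - w‖ := by
      rcases eq_or_lt_of_le (norm_nonneg e) with h | h
      · rw [← h]; simp
        positivity
      · have := (mul_le_mul_iff_of_pos_right h).mp (by nlinarith : α * ‖e‖ * ‖e‖ ≤ (‖ξ - η‖ + M * ‖u - w‖) * ‖e‖)
        exact this
    have hee : ‖e‖ ≤ (‖ξ - η‖ + M * ‖u - w‖) / α := by
      rw [le_div_iff₀ hα]; linarith
    have htri : ‖u - u_h‖ ≤ ‖u - w‖ + ‖e‖ := by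
      have : u - u_h = (u - w) - e := by rw [he]; abel
      rw [this]; exact norm_sub_le _ _
    have huw : ‖u - w‖ = ‖w - u‖ := norm_sub_rev _ _
    rw [huw] at htri hee
    have : (‖ξ - η‖ + M * ‖w - u‖) / α = (1/α) * ‖ξ - η‖ + (M/α) * ‖w - u‖ := by
      field_simp
    rw [this] at hee
    nlinarith [norm_nonneg (w - u)]
  set I1 := ⨅ w_h : K_h, ‖(w_h : V) - u‖ with hI1def
  set I2 := ⨅ η : W, ‖ξ - (η : V →L[ℝ] ℝ)‖ with hI2def
  have hI2 : (1 / α) * I2 = ⨅ η : W, (1 / α) * ‖ξ - (η : V →L[ℝ] ℝ)‖ :=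
    Real.mul_iInf_of_nonneg (by positivity) _
  have hI1 : (1 + M / α) * I1 = ⨅ w : K_h, (1 + M / α) * ‖(w : V) - u‖ :=
    Real.mul_iInf_of_nonneg (by positivity) _
  have A : ‖u - u_h‖ - (1 / α) * I2 ≤ (1 + M / α) * I1 := by
    rw [hI1]
    apply le_ciInf
    intro w
    have B : ‖u - u_h‖ - (1 + M / α) * ‖(w : V) - u‖ ≤ (1 / α) * I2 := by
      rw [hI2]
      apply le_ciInf
      intro η
      have := key w w.2 η η.2
      linarith
    linarith
  linarith
end

section
/- Let h̃ > 0 and let v : ℝ → ℝ be defined by v(x) = 1 − |x − h̃/2|/(h̃/2) for x ∈ [0, h̃] and v(x) = 0 elsewhere. Then |∫₀^{h̃} v(x) dx − h̃ · v(h̃/2)| = h̃/2. In particular, for the constant density φ ≡ 1 on (0,1), the Dirac approximation error ⟨φ, v⟩ − ⟨φ_h̃, v⟩ with weight λ = ∫₀^{h̃} φ = h̃ placed at the point h̃/2 has absolute value exactly h̃/2, i.e. it is of order exactly one in h̃. -/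
open MeasureTheory Set

/-- Saturation counterexample (Remark 1): for the tent function
`v(x) = 1 - |x - ht/2|/(ht/2)` on `[0, ht]` (and `0` elsewhere), where `ht`
plays the role of `h̃ > 0`, the error of the Dirac approximation of the
constant density `φ ≡ 1` with weight `λ = ∫₀^ht 1 = ht` placed at the point
`ht/2` is exactly `ht/2`: `|∫₀^ht v - ht · v(ht/2)| = ht/2`. -/
theorem dirac_saturation_example (ht : ℝ) (hht : 0 < ht) (v : ℝ → ℝ)
    (hv_in : ∀ x ∈ Icc (0:ℝ) ht, v x = 1 - |x - ht / 2| / (ht / 2))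
    (hv_out : ∀ x ∉ Icc (0:ℝ) ht, v x = 0) :
    |(∫ x in (0:ℝ)..ht, v x) - ht * v (ht / 2)| = ht / 2 := by
  have hc : (0:ℝ) < ht / 2 := by linarith
  have hmid : v (ht / 2) = 1 := by
    rw [hv_in (ht / 2) ⟨le_of_lt hc, by linarith⟩]
    simp
  set w : ℝ → ℝ := fun x => 1 - |x - ht / 2| / (ht / 2) with hw
  have hwc : Continuous w := by
    apply Continuous.sub continuous_const
    exact ((continuous_id.sub continuous_const).abs).div_const _
  have hcongr : EqOn v w (Set.uIcc (0:ℝ) ht) := by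
    intro x hx
    rw [Set.uIcc_of_le hht.le] at hx
    exact hv_in x hx
  have hint : (∫ x in (0:ℝ)..ht, v x) = ∫ x in (0:ℝ)..ht, w x :=
    intervalIntegral.integral_congr hcongr
  have h1 : (∫ x in (0:ℝ)..(ht/2), w x) = ∫ x in (0:ℝ)..(ht/2), x / (ht/2) := by
    apply intervalIntegral.integral_congr
    intro x hx
    rw [Set.uIcc_of_le (le_of_lt hc)] at hx
    simp only [hw]
    rw [abs_of_nonpos (by linarith [hx.2])]
    field_simp
    ring
  have h2 : (∫ x in (ht/2)..ht, w x) = ∫ x in (ht/2)..ht, (1 - (x - ht/2) / (ht/2)) := by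
    apply intervalIntegral.integral_congr
    intro x hx
    rw [Set.uIcc_of_le (by linarith : ht/2 ≤ ht)] at hx
    simp only [hw]
    rw [abs_of_nonneg (by linarith [hx.1])]
  have hsplit : (∫ x in (0:ℝ)..ht, w x)
      = (∫ x in (0:ℝ)..(ht/2), w x) + ∫ x in (ht/2)..ht, w x := by
    rw [intervalIntegral.integral_add_adjacent_intervals
      (hwc.intervalIntegrable _ _) (hwc.intervalIntegrable _ _)]
  have hval1 : (∫ x in (0:ℝ)..(ht/2), x / (ht/2)) = ht / 4 := by
    rw [intervalIntegral.integral_div, integral_id]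
    field_simp
    ring
  have hval2 : (∫ x in (ht/2)..ht, (1 - (x - ht/2) / (ht/2))) = ht / 4 := by
    have : (fun x => 1 - (x - ht/2) / (ht/2)) = fun x : ℝ => 1 - (x / (ht/2) - 1) := by
      funext x; field_simp
    rw [this]
    rw [intervalIntegral.integral_sub intervalIntegrable_const]
    · rw [intervalIntegral.integral_sub (by
        exact (continuous_id.div_const _).intervalIntegrable _ _) intervalIntegrable_const]
      rw [intervalIntegral.integral_div, integral_id]
      simp only [intervalIntegral.integral_const, smul_eq_mul]
      field_simp
      ring
    · exact ((continuous_id.div_const _).sub continuous_const).intervalIntegrable _ _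
  have : (∫ x in (0:ℝ)..ht, v x) = ht / 2 := by
    rw [hint, hsplit, h1, h2, hval1, hval2]; ring
  rw [this, hmid]
  rw [abs_of_nonpos (by linarith)]
  ring
end
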